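/- arXiv:2304.03071 — 11 statements merged into one kernel-verified Lean document; each statement's English description precedes it below -/
import Mathlib

section
/- Let A be a commutative ring and u, v, x, y in A such that uv-1 is invertible. Then M_4(x,u,v,y) = M_3(x + (1-v)(uv-1)^{-1}, uv-1, y + (1-u)(uv-1)^{-1}). -/
def mat {A : Type*} [CommRing A] (a : A) : Matrix (Fin 2) (Fin 2) A := !![a, -1; 1, 0]

def M {A : Type*} [CommRing A] {n : ℕ} (a : Fin n → A) : Matrix (Fin 2) (Fin 2) A :=
  ((List.ofFn a).map mat).reverse.prod

theorem stmt3 {A : Type*} [CommRing A] (u v x y : A) (h : IsUnit (u * v - 1)) :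
    mat y * mat v * mat u * mat x =
      mat (y + (1 - u) * Ring.inverse (u * v - 1)) * mat (u * v - 1) *
        mat (x + (1 - v) * Ring.inverse (u * v - 1)) := by
  have hw : (u * v - 1) * Ring.inverse (u * v - 1) = 1 := Ring.mul_inverse_cancel _ h
  set w := Ring.inverse (u * v - 1) with hwdef
  ext i j
  fin_cases i <;> fin_cases j <;>
    simp [mat, Matrix.mul_apply, Fin.sum_univ_two]
  · linear_combination (-((1-u)*x + 1 + y*(1-v) + (1-u)*(1-v)*w)) * hw
  · linear_combination (1-u) * hw
  · linear_combination (-(1-v)) * hw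
  · ring
end

section
/- Let A be a commutative ring, a a unit of A and b, x, y in A. Then M_5(x, a, a^{-1}, b, y) = M_3((a^2 x - 2a + b)·a^{-2}, -a, (a y - 1)·a^{-1}). -/
theorem stmt4 {A : Type*} [CommRing A] (a : Aˣ) (b x y : A) :
    mat y * mat b * mat ((a⁻¹ : Aˣ) : A) * mat (a : A) * mat x =
      mat (((a : A) * y - 1) * ((a⁻¹ : Aˣ) : A)) * mat (-(a : A)) *
        mat (((a : A) ^ 2 * x - 2 * (a : A) + b) * ((a⁻¹ : Aˣ) : A) ^ 2) := by
  have h : (a : A) * ((a⁻¹ : Aˣ) : A) = 1 := a.mul_inv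
  ext i j
  fin_cases i <;> fin_cases j <;>
    simp [mat, Matrix.mul_apply, Fin.sum_univ_succ]
  · linear_combination (((a:A)^3*((a⁻¹:Aˣ):A)^2*x*y) + (-2*(a:A)^2*((a⁻¹:Aˣ):A)^2*y) + (-1*(a:A)^2*((a⁻¹:Aˣ):A)^2*x) + ((a:A)*((a⁻¹:Aˣ):A)^2*y*b) + (2*(a:A)*((a⁻¹:Aˣ):A)^2) + (-1*((a⁻¹:Aˣ):A)^2*b) + ((a:A)^2*((a⁻¹:Aˣ):A)*x*y) + (-2*(a:A)*((a⁻¹:Aˣ):A)*y) + (((a⁻¹:Aˣ):A)*y*b) + ((a:A)*x*y) + (x*y*b) + (-1*x) + (-1*y) + ((-1*(a:A)^3*((a⁻¹:Aˣ):A)^2*x*y) + (2*(a:A)^2*((a⁻¹:Aˣ):A)^2*y) + ((a:A)^2*((a⁻¹:Aˣ):A)^2*x) + (-1*(a:A)*((a⁻¹:Aˣ):A)^2*y*b) + (-2*(a:A)*((a⁻¹:Aˣ):A)^2) + (((a⁻¹:Aˣ):A)^2*b))) * h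
  · linear_combination ((-1*(a:A)*y) + (-1*y*b) + (2) + (((a:A)*y) + (-1))) * h
  · linear_combination (((a:A)^2*((a⁻¹:Aˣ):A)*x) + (-2*(a:A)*((a⁻¹:Aˣ):A)) + (((a⁻¹:Aˣ):A)*b) + ((a:A)*x) + (x*b) + (-2)) * h
  · linear_combination ((-1*b)) * h
end

section
/- Let A be a commutative ring, λ a unit of A, n = 2m with m ≥ 2, and (a_1,...,a_{2m}) in A^{2m}. If M_{2m}(a_1,...,a_{2m}) = ε·Id with ε ∈ {1,-1}, then M_{2m}(λa_1, λ^{-1}a_2, λa_3, λ^{-1}a_4, ..., λa_{2m-1}, λ^{-1}a_{2m}) = ε·Id. -/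
lemma M_succ {A : Type*} [CommRing A] {n : ℕ} (a : Fin (n+1) → A) :
    M a = mat (a (Fin.last n)) * M (a ∘ Fin.castSucc) := by
  rw [M, List.ofFn_succ']
  simp [M, Function.comp]
  rfl

lemma mat_mul_left {A : Type*} [CommRing A] (l : Aˣ) (a : A) :
    mat ((l : A) * a) = !![(l : A), 0; 0, 1] * mat a * !![1, 0; 0, ((l⁻¹ : Aˣ) : A)] := by
  ext i j
  fin_cases i <;> fin_cases j <;>
    simp [mat, Matrix.mul_apply, Fin.sum_univ_two]

lemma mat_mul_left_inv {A : Type*} [CommRing A] (l : Aˣ) (a : A) :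
    mat (((l⁻¹ : Aˣ) : A) * a) = !![((l⁻¹ : Aˣ) : A), 0; 0, 1] * mat a * !![1, 0; 0, (l : A)] := by
  have := mat_mul_left l⁻¹ a
  simpa using this

lemma key {A : Type*} [CommRing A] (l : Aˣ) :
    ∀ (k : ℕ) (a : Fin (2*k) → A),
    M (fun i => if (i : ℕ) % 2 = 0 then (l : A) * a i else ((l⁻¹ : Aˣ) : A) * a i) =
      (l : A) • (!![((l⁻¹ : Aˣ) : A), 0; 0, 1] * M a * !![1, 0; 0, ((l⁻¹ : Aˣ) : A)]) := by
  intro k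
  induction k with
  | zero =>
      intro a
      have h1 : M a = 1 := by simp [M, List.ofFn_zero]
      have h2 : M (fun i : Fin 0 => if (i : ℕ) % 2 = 0 then (l : A) * a i else ((l⁻¹ : Aˣ) : A) * a i) = 1 := by
        simp [M]
      rw [h2, h1, mul_one]
      ext i j
      fin_cases i <;> fin_cases j <;> simp [Matrix.mul_apply, Fin.sum_univ_two, Matrix.one_apply]
  | succ k ih =>
      have hA' : ∀ X : Matrix (Fin 2) (Fin 2) A,
          (!![1, 0; 0, (l : A)]) * (!![(l : A), 0; 0, 1] * X) = (l : A) • X := by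
        intro X
        rw [← mul_assoc]
        have : (!![1, 0; 0, (l : A)]) * !![(l : A), 0; 0, 1] = (l : A) • 1 := by
          ext i j
          fin_cases i <;> fin_cases j <;>
            simp [Matrix.mul_apply, Fin.sum_univ_two, Matrix.one_apply]
        rw [this, Matrix.smul_mul, one_mul]
      have hB' : ∀ X : Matrix (Fin 2) (Fin 2) A,
          (!![1, 0; 0, ((l⁻¹ : Aˣ) : A)]) * (!![((l⁻¹ : Aˣ) : A), 0; 0, 1] * X)
            = ((l⁻¹ : Aˣ) : A) • X := by
        intro X
        rw [← mul_assoc]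
        have : (!![1, 0; 0, ((l⁻¹ : Aˣ) : A)]) * !![((l⁻¹ : Aˣ) : A), 0; 0, 1]
            = ((l⁻¹ : Aˣ) : A) • 1 := by
          ext i j
          fin_cases i <;> fin_cases j <;>
            simp [Matrix.mul_apply, Fin.sum_univ_two, Matrix.one_apply]
        rw [this, Matrix.smul_mul, one_mul]
      have main : ∀ b : Fin (2*k+1+1) → A,
          M (fun i => if (i : ℕ) % 2 = 0 then (l : A) * b i else ((l⁻¹ : Aˣ) : A) * b i) =
            (l : A) • (!![((l⁻¹ : Aˣ) : A), 0; 0, 1] * M b * !![1, 0; 0, ((l⁻¹ : Aˣ) : A)]) := by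
        intro b
        rw [M_succ, M_succ, M_succ, M_succ]
        simp only [Function.comp_def, Fin.coe_castSucc, Fin.val_last]
        rw [if_neg (by omega : ¬ (2*k+1) % 2 = 0), if_pos (by omega : (2*k) % 2 = 0)]
        rw [ih (fun i => b (Fin.castSucc (Fin.castSucc i)))]
        rw [mat_mul_left_inv, mat_mul_left]
        simp only [mul_assoc, Matrix.mul_smul]
        rw [hA', hB']
        simp only [Matrix.mul_smul, smul_smul]
        congr 1
        have hl : (l : A) * ((l⁻¹ : Aˣ) : A) = 1 := by
          exact_mod_cast l.mul_inv
        ring_nf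
        rw [pow_two, mul_assoc, hl, mul_one]
      intro a
      exact main a

theorem stmt5 {A : Type*} [CommRing A] (l : Aˣ) (m : ℕ) (hm : 2 ≤ m)
    (a : Fin (2 * m) → A) (ε : A) (hε : ε = 1 ∨ ε = -1)
    (h : M a = ε • (1 : Matrix (Fin 2) (Fin 2) A)) :
    M (fun i => if (i : ℕ) % 2 = 0 then (l : A) * a i else ((l⁻¹ : Aˣ) : A) * a i) =
      ε • (1 : Matrix (Fin 2) (Fin 2) A) := by
  rw [key l m a, h]
  have hl : (l : A) * ((l⁻¹ : Aˣ) : A) = 1 := by exact_mod_cast l.mul_inv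
  ext i j
  fin_cases i <;> fin_cases j <;>
    simp [Matrix.mul_apply, Fin.sum_univ_two, Matrix.one_apply, Matrix.smul_apply] <;>
    linear_combination ε * hl
end

section
/- Let A be a commutative ring. A 4-tuple (a_1,a_2,a_3,a_4) in A^4 satisfies M_4(a_1,a_2,a_3,a_4) = ±Id if and only if it is of the form (-a, b, a, -b) with ab = 0, or of the form (a, b, a, b) with ab = 2. -/
theorem stmt10 {A : Type*} [CommRing A] (a₁ a₂ a₃ a₄ : A) :
    (mat a₄ * mat a₃ * mat a₂ * mat a₁ = 1 ∨ mat a₄ * mat a₃ * mat a₂ * mat a₁ = -1) ↔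
      ((∃ a b : A, a * b = 0 ∧ a₁ = -a ∧ a₂ = b ∧ a₃ = a ∧ a₄ = -b) ∨
        (∃ a b : A, a * b = 2 ∧ a₁ = a ∧ a₂ = b ∧ a₃ = a ∧ a₄ = b)) := by
  simp only [mat, ← Matrix.ext_iff, Fin.forall_fin_two, Matrix.mul_apply, Fin.sum_univ_two,
    Matrix.cons_val', Matrix.cons_val_zero, Matrix.cons_val_one, Matrix.head_cons,
    Matrix.empty_val', Matrix.cons_val_fin_one, Matrix.head_fin_const, Matrix.one_apply,
    Matrix.neg_apply, Matrix.of_apply, Matrix.cons_val_zero, mul_one, mul_neg, mul_zero, neg_mul,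
    one_mul, zero_mul, add_zero, zero_add, if_true, if_pos, Fin.zero_eq_one_iff, Fin.one_eq_zero_iff,
    Nat.succ_ne_self, if_false, ite_true, ite_false, neg_zero, neg_neg, Ne, OfNat.ofNat_ne_one,
    not_false_iff, eq_self_iff_true]
  constructor
  · rintro (⟨⟨h11, h12⟩, h21, h22⟩ | ⟨⟨h11, h12⟩, h21, h22⟩)
    · refine Or.inl ⟨a₃, a₂, ?_, ?_, rfl, rfl, ?_⟩
      · linear_combination -h22
      · linear_combination -h21 - a₁ * h22
      · linear_combination h12 - a₄ * h22
    · refine Or.inr ⟨a₃, a₂, ?_, ?_, rfl, rfl, ?_⟩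
      · linear_combination -h22
      · linear_combination h21 + a₁ * h22
      · linear_combination -h12 + a₄ * h22
  · rintro (⟨a, b, hab, rfl, rfl, rfl, rfl⟩ | ⟨a, b, hab, rfl, rfl, rfl, rfl⟩)
    · refine Or.inl ⟨⟨?_, ?_⟩, ?_, ?_⟩
      · linear_combination (1 + a₂ * a₃) * hab
      · linear_combination a₂ * hab
      · linear_combination -a₃ * hab
      · linear_combination -hab
    · refine Or.inr ⟨⟨?_, ?_⟩, ?_, ?_⟩
      · linear_combination (a₃ * a₄ - 1) * hab
      · linear_combination -a₄ * hab
      · linear_combination a₃ * hab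
      · linear_combination -hab
end

section
/- Let q be a prime power, B in SL_2(F_q), and for n ≥ 1 let u_n^B denote the number of n-tuples (a_1,...,a_n) in F_q^n with M_n(a_1,...,a_n) = B. Then for all n > 4: u_n^B = (q-1)(u_{n-1}^B - q·u_{n-3}^{-B}) + q·u_{n-2}^{-B} + q·(u_{n-2}^B - q·u_{n-4}^{-B}). -/
set_option linter.unusedSectionVars false
open scoped Classical

namespace Stmt12Aux

lemma nat_card_sigma' {ι : Type*} [Fintype ι] {α : ι → Type*} [∀ i, Finite (α i)] :
    Nat.card (Sigma α) = ∑ i, Nat.card (α i) := by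
  have : ∀ i, Fintype (α i) := fun i => Fintype.ofFinite _
  simp [Nat.card_eq_fintype_card, Fintype.card_sigma]

variable {F : Type*} [Field F] [Fintype F]

noncomputable def Nc (k : ℕ) (C : Matrix (Fin 2) (Fin 2) F) : ℤ :=
  (Nat.card {x : Fin k → F // M x = C} : ℤ)

lemma M_zero (x : Fin 0 → F) : M x = 1 := by simp [M]

lemma M_succ {n : ℕ} (a : Fin (n+1) → F) : M a = M (Fin.tail a) * mat (a 0) := by
  simp [M, List.ofFn_succ]; rfl

lemma M_one (x : Fin 1 → F) : M x = mat (x 0) := by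
  rw [M_succ, M_zero, one_mul]

lemma M_append {m k : ℕ} (h : Fin m → F) (t : Fin k → F) :
    M (Fin.append h t) = M t * M h := by
  simp [M, List.ofFn_fin_append, List.reverse_append]

lemma det_mat (a : F) : (mat a).det = 1 := by simp [mat]

lemma det_M {n : ℕ} (a : Fin n → F) : (M a).det = 1 := by
  induction n with
  | zero => simp [M_zero]
  | succ k ih => rw [M_succ]; simp [det_mat, ih (Fin.tail a)]

def matinv {A : Type*} [CommRing A] (a : A) : Matrix (Fin 2) (Fin 2) A := !![0, 1; -1, a]

lemma mat_mul_matinv (a : F) : mat a * matinv a = 1 := by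
  ext i j
  fin_cases i <;> fin_cases j <;> simp [mat, matinv, Matrix.mul_apply, Fin.sum_univ_two]

lemma matinv_mul_mat (a : F) : matinv a * mat a = 1 := by
  ext i j
  fin_cases i <;> fin_cases j <;> simp [mat, matinv, Matrix.mul_apply, Fin.sum_univ_two]

lemma det_matinv (a : F) : (matinv a).det = 1 := by simp [matinv]

lemma mul_matinv (C : Matrix (Fin 2) (Fin 2) F) (a : F) :
    C * matinv a = !![-(C 0 1), C 0 0 + C 0 1 * a; -(C 1 1), C 1 0 + C 1 1 * a] := by
  ext i j
  fin_cases i <;> fin_cases j <;>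
    simp [matinv, Matrix.mul_apply, Fin.sum_univ_two] <;> ring

lemma Nc_succ (k : ℕ) (C : Matrix (Fin 2) (Fin 2) F) :
    Nc (k+1) C = ∑ a : F, Nc k (C * matinv a) := by
  have e : {x : Fin (k+1) → F // M x = C} ≃ Σ a : F, {t : Fin k → F // M t = C * matinv a} :=
    { toFun := fun x => ⟨x.1 0, Fin.tail x.1, by
        have h := x.2
        rw [M_succ] at h
        have : M (Fin.tail x.1) * (mat (x.1 0) * matinv (x.1 0)) = C * matinv (x.1 0) := by
          rw [← Matrix.mul_assoc, h]
        simpa [mat_mul_matinv] using this⟩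
      invFun := fun p => ⟨Fin.cons p.1 p.2.1, by
        rw [M_succ]
        simp [Fin.tail_cons, p.2.2, Matrix.mul_assoc, matinv_mul_mat]⟩
      left_inv := fun x => by simp
      right_inv := fun p => by rcases p with ⟨a, t, ht⟩; simp; rfl }
  rw [Nc, Nat.card_congr e, nat_card_sigma']
  push_cast
  rfl

def inv2 (X : Matrix (Fin 2) (Fin 2) F) : Matrix (Fin 2) (Fin 2) F :=
  !![X 1 1, -(X 0 1); -(X 1 0), X 0 0]

lemma mul_inv2 {X : Matrix (Fin 2) (Fin 2) F} (h : X.det = 1) : X * inv2 X = 1 := by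
  obtain ⟨p, r, s, t, rfl⟩ : ∃ p r s t, X = !![p, r; s, t] :=
    ⟨X 0 0, X 0 1, X 1 0, X 1 1, Matrix.eta_fin_two X⟩
  rw [Matrix.det_fin_two_of] at h
  ext i j
  fin_cases i <;> fin_cases j <;>
    simp [inv2, Matrix.mul_apply, Fin.sum_univ_two]
  all_goals (try ring)
  all_goals linear_combination h

lemma inv2_mul {X : Matrix (Fin 2) (Fin 2) F} (h : X.det = 1) : inv2 X * X = 1 := by
  obtain ⟨p, r, s, t, rfl⟩ : ∃ p r s t, X = !![p, r; s, t] :=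
    ⟨X 0 0, X 0 1, X 1 0, X 1 1, Matrix.eta_fin_two X⟩
  rw [Matrix.det_fin_two_of] at h
  ext i j
  fin_cases i <;> fin_cases j <;>
    simp [inv2, Matrix.mul_apply, Fin.sum_univ_two]
  all_goals (try ring)
  all_goals linear_combination h

lemma det_inv2 {X : Matrix (Fin 2) (Fin 2) F} (h : X.det = 1) : (inv2 X).det = 1 := by
  obtain ⟨p, r, s, t, rfl⟩ : ∃ p r s t, X = !![p, r; s, t] :=
    ⟨X 0 0, X 0 1, X 1 0, X 1 1, Matrix.eta_fin_two X⟩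
  rw [Matrix.det_fin_two_of] at h
  simp [inv2, Matrix.det_fin_two]
  linear_combination h

lemma card_split (m k : ℕ) (B : Matrix (Fin 2) (Fin 2) F) :
    (Nat.card {a : Fin (m + k) → F // M a = B} : ℤ) =
      ∑ h : Fin m → F, Nc k (B * inv2 (M h)) := by
  have e : {a : Fin (m + k) → F // M a = B} ≃
      Σ h : Fin m → F, {t : Fin k → F // M t = B * inv2 (M h)} :=
    { toFun := fun a => ⟨fun i => a.1 (Fin.castAdd k i), fun i => a.1 (Fin.natAdd m i), by
        have happ : Fin.append (fun i => a.1 (Fin.castAdd k i)) (fun i => a.1 (Fin.natAdd m i)) = a.1 :=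
          Fin.append_castAdd_natAdd (f := a.1)
        have h2 : M (fun i => a.1 (Fin.natAdd m i)) * M (fun i => a.1 (Fin.castAdd k i)) = B := by
          rw [← M_append, happ, a.2]
        have h3 := congrArg (fun X => X * inv2 (M (fun i => a.1 (Fin.castAdd k i)))) h2
        simpa [Matrix.mul_assoc, mul_inv2 (det_M _)] using h3⟩
      invFun := fun p => ⟨Fin.append p.1 p.2.1, by
        rw [M_append, p.2.2, Matrix.mul_assoc, inv2_mul (det_M _), Matrix.mul_one]⟩
      left_inv := fun a => Subtype.ext (Fin.append_castAdd_natAdd (f := a.1))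
      right_inv := fun p => by
        rcases p with ⟨h, t, ht⟩
        have h1 : (fun i => Fin.append h t (Fin.castAdd k i)) = h := by
          funext i; simp [Fin.append_left]
        have h2 : (fun i => Fin.append h t (Fin.natAdd m i)) = t := by
          funext i; simp [Fin.append_right]
        exact Sigma.subtype_ext h1 h2 }
  rw [Nat.card_congr e, nat_card_sigma']
  push_cast
  rfl


lemma mul_matinv_lit (p r s t a : F) :
    (!![p, r; s, t] : Matrix (Fin 2) (Fin 2) F) * matinv a = !![-r, p + r * a; -t, s + t * a] := by
  ext i j
  fin_cases i <;> fin_cases j <;>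
    simp [matinv, Matrix.mul_apply, Fin.sum_univ_two] <;> try ring

lemma sum_affine (c d : F) (hd : d ≠ 0) (f : F → ℤ) :
    ∑ a : F, f (c + d * a) = ∑ y : F, f y :=
  Fintype.sum_equiv
    ⟨fun a => c + d * a, fun y => (y - c) / d,
      fun a => by field_simp; ring, fun y => by field_simp; ring⟩
    _ _ (fun a => rfl)

lemma Nc_one (p r s t : F) :
    Nc 1 (!![p, r; s, t]) = if r = -1 ∧ s = 1 ∧ t = 0 then 1 else 0 := by
  split_ifs with h
  · obtain ⟨h1, h2, h3⟩ := h
    subst h1; subst h2; subst h3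
    have : Unique {x : Fin 1 → F // M x = !![p, -1; 1, 0]} :=
      { default := ⟨fun _ => p, by rw [M_one]; rfl⟩
        uniq := fun x => Subtype.ext (funext fun i => by
          have hi : i = 0 := Subsingleton.elim i 0
          subst hi
          have h00 := congrArg (fun X => X 0 0) x.2
          simpa [M_one, mat] using h00) }
    simp [Nc, Nat.card_unique]
  · have : IsEmpty {x : Fin 1 → F // M x = !![p, r; s, t]} := ⟨fun x => by
      apply h
      have h01 := congrArg (fun X => X 0 1) x.2
      have h10 := congrArg (fun X => X 1 0) x.2
      have h11 := congrArg (fun X => X 1 1) x.2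
      simp [M_one, mat] at h01 h10 h11
      exact ⟨h01.symm, h10.symm, h11.symm⟩⟩
    simp [Nc, Nat.card_of_isEmpty]

lemma Nc_two (p r s t : F) (hd : p * t - r * s = 1) :
    Nc 2 (!![p, r; s, t]) = if t = -1 then 1 else 0 := by
  rw [Nc_succ]
  simp only [mul_matinv_lit, Nc_one]
  by_cases ht : t = -1
  · have hiff : ∀ a : F, (p + r * a = -1 ∧ -t = 1 ∧ s + t * a = 0) ↔ a = s := by
      intro a
      subst ht
      constructor
      · rintro ⟨-, -, h3⟩
        linear_combination -h3
      · rintro rfl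
        refine ⟨by linear_combination -hd, by ring, by ring⟩
    simp only [hiff]
    rw [Finset.sum_ite_eq' Finset.univ s (fun _ => (1 : ℤ))]
    simp [ht]
  · have hfalse : ∀ a : F, ¬(p + r * a = -1 ∧ -t = 1 ∧ s + t * a = 0) := by
      rintro a ⟨-, h2, -⟩
      exact ht (by linear_combination -h2)
    simp [hfalse, ht]

lemma Nc_three (p r s t : F) (hd : p * t - r * s = 1) :
    Nc 3 (!![p, r; s, t]) =
      if t = 0 then (if s = -1 then (Fintype.card F : ℤ) else 0) else 1 := by
  rw [Nc_succ]
  simp only [mul_matinv_lit]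
  have hform : ∀ a : F, Nc 2 (!![-r, p + r * a; -t, s + t * a]) =
      if s + t * a = -1 then 1 else 0 := fun a =>
    Nc_two _ _ _ _ (by linear_combination hd)
  simp only [hform]
  by_cases ht : t = 0
  · subst ht
    simp only [zero_mul, add_zero]
    rw [Finset.sum_const, Finset.card_univ, nsmul_eq_mul]
    simp only [eq_self_iff_true, if_true]
    split_ifs <;> ring
  · rw [sum_affine s t ht (fun y => if y = -1 then 1 else 0)]
    rw [Finset.sum_ite_eq' Finset.univ (-1 : F) (fun _ => (1 : ℤ))]
    simp [ht]

lemma Nc_four (p r s t : F) (hd : p * t - r * s = 1) :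
    Nc 4 (!![p, r; s, t]) =
      if t = 0 then (Fintype.card F : ℤ)
      else ((Fintype.card F : ℤ) - 1 + if t = 1 then (Fintype.card F : ℤ) else 0) := by
  rw [Nc_succ]
  simp only [mul_matinv_lit]
  have hform : ∀ a : F, Nc 3 (!![-r, p + r * a; -t, s + t * a]) =
      if s + t * a = 0 then (if -t = -1 then (Fintype.card F : ℤ) else 0) else 1 := fun a =>
    Nc_three _ _ _ _ (by linear_combination hd)
  simp only [hform]
  by_cases ht : t = 0
  · subst ht
    have hs : s ≠ 0 := by
      intro h
      rw [h] at hd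
      exact one_ne_zero (by linear_combination -hd)
    simp only [zero_mul, add_zero, if_neg hs]
    rw [Finset.sum_const, Finset.card_univ, nsmul_eq_mul]
    simp only [eq_self_iff_true, if_true]
    ring
  · rw [sum_affine s t ht
      (fun y => if y = 0 then (if -t = -1 then (Fintype.card F : ℤ) else 0) else 1)]
    have hfy : ∀ y : F, (if y = 0 then (if -t = -1 then (Fintype.card F : ℤ) else 0) else 1) =
        (if y = 0 then ((if t = 1 then (Fintype.card F : ℤ) else 0) - 1) else 0) + 1 := by
      intro y
      by_cases hy : y = 0
      · subst hy
        rw [if_pos rfl, if_pos rfl, if_congr (neg_inj : (-t = -1) ↔ t = 1) rfl rfl]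
        ring
      · rw [if_neg hy, if_neg hy]
        ring
    simp only [hfy]
    rw [Finset.sum_add_distrib,
      Finset.sum_ite_eq' Finset.univ (0 : F)
        (fun _ => (if t = 1 then (Fintype.card F : ℤ) else 0) - 1),
      Finset.sum_const, Finset.card_univ, nsmul_eq_mul, if_pos (Finset.mem_univ (0 : F)),
      if_neg ht]
    ring

lemma Nc_five (p r s t : F) (hd : p * t - r * s = 1) :
    Nc 5 (!![p, r; s, t]) =
      if t = 0 then
        ((Fintype.card F : ℤ) * ((Fintype.card F : ℤ) - 1) +
          if s = 1 then (Fintype.card F : ℤ) * (Fintype.card F : ℤ) else 0)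
      else ((Fintype.card F : ℤ) * (Fintype.card F : ℤ) + 1) := by
  rw [Nc_succ]
  simp only [mul_matinv_lit]
  have hform : ∀ a : F, Nc 4 (!![-r, p + r * a; -t, s + t * a]) =
      if s + t * a = 0 then (Fintype.card F : ℤ)
      else ((Fintype.card F : ℤ) - 1 + if s + t * a = 1 then (Fintype.card F : ℤ) else 0) :=
    fun a => Nc_four _ _ _ _ (by linear_combination hd)
  simp only [hform]
  by_cases ht : t = 0
  · subst ht
    have hs : s ≠ 0 := by
      intro h
      rw [h] at hd
      exact one_ne_zero (by linear_combination -hd)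
    simp only [zero_mul, add_zero, if_neg hs]
    rw [Finset.sum_const, Finset.card_univ, nsmul_eq_mul]
    simp only [eq_self_iff_true, if_true]
    split_ifs <;> ring
  · rw [sum_affine s t ht
      (fun y => if y = 0 then (Fintype.card F : ℤ)
        else ((Fintype.card F : ℤ) - 1 + if y = 1 then (Fintype.card F : ℤ) else 0))]
    have hfy : ∀ y : F, (if y = 0 then (Fintype.card F : ℤ)
        else ((Fintype.card F : ℤ) - 1 + if y = 1 then (Fintype.card F : ℤ) else 0)) =
        ((Fintype.card F : ℤ) - 1) + ((if y = 0 then 1 else 0) +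
          (if y = 1 then (Fintype.card F : ℤ) else 0)) := by
      intro y
      by_cases h0 : y = 0
      · subst h0
        rw [if_pos rfl, if_pos rfl, if_neg (zero_ne_one)]
        ring
      · rw [if_neg h0, if_neg h0]
        ring
    simp only [hfy]
    rw [Finset.sum_add_distrib, Finset.sum_add_distrib, Finset.sum_const, Finset.card_univ,
      Finset.sum_ite_eq' Finset.univ (0 : F) (fun _ => (1 : ℤ)),
      Finset.sum_ite_eq' Finset.univ (1 : F) (fun _ => (Fintype.card F : ℤ)),
      nsmul_eq_mul, if_pos (Finset.mem_univ (0 : F)), if_pos (Finset.mem_univ (1 : F)),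
      if_neg ht]
    ring

lemma neg_lit (p r s t : F) : -(!![p, r; s, t]) = !![-p, -r; -s, -t] := by
  ext i j
  fin_cases i <;> fin_cases j <;> simp

lemma key (C : Matrix (Fin 2) (Fin 2) F) (hd : C.det = 1) :
    Nc 5 C = ((Fintype.card F : ℤ) - 1) * (Nc 4 C - (Fintype.card F : ℤ) * Nc 2 (-C))
      + (Fintype.card F : ℤ) * Nc 3 (-C)
      + (Fintype.card F : ℤ) * (Nc 3 C - (Fintype.card F : ℤ) * Nc 1 (-C)) := by
  obtain ⟨p, r, s, t, rfl⟩ : ∃ p r s t, C = !![p, r; s, t] :=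
    ⟨C 0 0, C 0 1, C 1 0, C 1 1, Matrix.eta_fin_two C⟩
  rw [Matrix.det_fin_two_of] at hd
  rw [neg_lit, Nc_five p r s t hd, Nc_four p r s t hd, Nc_three p r s t hd,
    Nc_three (-p) (-r) (-s) (-t) (by linear_combination hd),
    Nc_two (-p) (-r) (-s) (-t) (by linear_combination hd), Nc_one]
  by_cases ht : t = 0
  · subst ht
    have e1 : ((0:F) = 0) = True := by simp
    have e2 : ((-0:F) = -1) = False := by
      rw [eq_iff_iff, iff_false]
      intro h
      exact one_ne_zero (by linear_combination h)
    have e3 : ((-0:F) = 0) = True := by simp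
    have e4 : ((-s:F) = -1) = (s = 1) := by rw [eq_iff_iff]; exact neg_inj
    simp only [e1, e2, e3, e4, if_true, if_false, and_true]
    have e5 : (-r = -1 ∧ -s = 1) = (r = 1 ∧ s = -1) := by
      rw [eq_iff_iff]
      constructor
      · rintro ⟨h1, h2⟩
        exact ⟨by linear_combination -h1, by linear_combination -h2⟩
      · rintro ⟨h1, h2⟩
        exact ⟨by linear_combination -h1, by linear_combination -h2⟩
    simp only [e5]
    by_cases hs : s = -1
    · have hr : r = 1 := by
        rw [hs] at hd
        linear_combination hd
      rw [if_pos hs, if_pos (⟨hr, hs⟩ : r = 1 ∧ s = -1)]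
      split_ifs <;> ring
    · rw [if_neg hs, if_neg (fun hc : r = 1 ∧ s = -1 => hs hc.2)]
      split_ifs <;> ring
  · have f1 : ((t:F) = 0) = False := by simp [ht]
    have f2 : ((-t:F) = 0) = False := by simp [ht]
    have f3 : ((-t:F) = -1) = (t = 1) := by rw [eq_iff_iff]; exact neg_inj
    have f4 : (-r = -1 ∧ -s = 1 ∧ (-t:F) = 0) = False := by
      rw [eq_iff_iff, iff_false]
      rintro ⟨-, -, h⟩
      exact ht (by linear_combination -h)
    simp only [f1, f2, f3, and_false, if_false]
    split_ifs <;> ring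

end Stmt12Aux

theorem stmt12 {F : Type*} [Field F] [Fintype F]
    (B : Matrix (Fin 2) (Fin 2) F) (hB : B.det = 1) (n : ℕ) (hn : 4 < n) :
    (Nat.card {a : Fin n → F // M a = B} : ℤ) =
      ((Fintype.card F : ℤ) - 1) *
          ((Nat.card {a : Fin (n - 1) → F // M a = B} : ℤ) -
            (Fintype.card F : ℤ) * (Nat.card {a : Fin (n - 3) → F // M a = -B} : ℤ)) +
        (Fintype.card F : ℤ) * (Nat.card {a : Fin (n - 2) → F // M a = -B} : ℤ) +
        (Fintype.card F : ℤ) *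
          ((Nat.card {a : Fin (n - 2) → F // M a = B} : ℤ) -
            (Fintype.card F : ℤ) * (Nat.card {a : Fin (n - 4) → F // M a = -B} : ℤ)) := by
  obtain ⟨m, rfl⟩ : ∃ m, n = m + 5 := ⟨n - 5, by omega⟩
  have E1 : m + 5 - 1 = m + 4 := by omega
  have E2 : m + 5 - 2 = m + 3 := by omega
  have E3 : m + 5 - 3 = m + 2 := by omega
  have E4 : m + 5 - 4 = m + 1 := by omega
  rw [E1, E2, E3, E4]
  rw [Stmt12Aux.card_split m 5 B, Stmt12Aux.card_split m 4 B, Stmt12Aux.card_split m 3 B,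
    Stmt12Aux.card_split m 3 (-B), Stmt12Aux.card_split m 2 (-B), Stmt12Aux.card_split m 1 (-B)]
  simp only [Matrix.neg_mul]
  rw [Finset.sum_congr rfl fun h _ => Stmt12Aux.key (B * Stmt12Aux.inv2 (M h))
    (by rw [Matrix.det_mul, hB, Stmt12Aux.det_inv2 (Stmt12Aux.det_M h), one_mul])]
  simp only [Finset.sum_add_distrib, Finset.sum_sub_distrib, ← Finset.mul_sum]
end

section
/- Let q be a power of an odd prime, n > 4, and B in SL_2(F_q). For each a in F_q, the map sending (a, 0, a_3, a_4, ..., a_n) to (a + a_3, a_4, ..., a_n) is a bijection from the set of n-tuples in F_q^n with first coordinate a, second coordinate 0, and M_n product equal to B, onto the set of (n-2)-tuples with M_{n-2} product equal to -B. Consequently the number of n-tuples with a_2 = 0 and M_n(a_1,...,a_n) = B equals q times the number of (n-2)-tuples with M_{n-2}(b_1,...,b_{n-2}) = -B. -/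
lemma M_succ_s13 {A : Type*} [CommRing A] {k : ℕ} (f : Fin (k+1) → A) :
    M f = M (fun i : Fin k => f i.succ) * mat (f 0) := by
  simp [M, List.ofFn_succ]

lemma mat_key {A : Type*} [CommRing A] (x z : A) : mat z * mat 0 * mat x = -(mat (x + z)) := by
  ext i j
  fin_cases i <;> fin_cases j <;> simp [mat, Matrix.mul_apply, Fin.sum_univ_succ] <;> ring

lemma M_split {A : Type*} [CommRing A] {m : ℕ} (v : Fin (m+3) → A) :
    M v = M (fun j : Fin m => v ⟨(j : ℕ) + 3, by omega⟩) *
      (mat (v ⟨2, by omega⟩) * mat (v ⟨1, by omega⟩) * mat (v ⟨0, by omega⟩)) := by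
  rw [M_succ_s13, M_succ_s13, M_succ_s13]
  simp only [mul_assoc]
  rfl

theorem stmt13 {F : Type*} [Field F] [Fintype F] (hq : Odd (Fintype.card F))
    (B : Matrix (Fin 2) (Fin 2) F) (hB : B.det = 1) (n : ℕ) (hn : 4 < n) :
    (∀ a : F,
      Set.BijOn
        (fun (v : Fin n → F) (j : Fin (n - 2)) =>
          if (j : ℕ) = 0 then a + v ⟨2, by omega⟩
          else v ⟨(j : ℕ) + 2, by have := j.isLt; omega⟩)
        {v : Fin n → F | v ⟨0, by omega⟩ = a ∧ v ⟨1, by omega⟩ = 0 ∧ M v = B}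
        {w : Fin (n - 2) → F | M w = -B}) ∧
    Nat.card {v : Fin n → F // v ⟨1, by omega⟩ = 0 ∧ M v = B} =
      Fintype.card F * Nat.card {w : Fin (n - 2) → F // M w = -B} := by
  obtain ⟨m, rfl⟩ : ∃ m, n = m + 3 := ⟨n - 3, by omega⟩
  have key : ∀ (a : F) (v : Fin (m + 3) → F), v ⟨0, by omega⟩ = a → v ⟨1, by omega⟩ = 0 →
      M (fun j : Fin (m + 1) =>
        if (j : ℕ) = 0 then a + v ⟨2, by omega⟩
        else v ⟨(j : ℕ) + 2, by have := j.isLt; omega⟩) = -(M v) := by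
    intro a v h0 h1
    rw [M_split v, h0, h1, mat_key, M_succ_s13]
    have h2 : (fun i : Fin m =>
        if ((i.succ : Fin (m+1)) : ℕ) = 0 then a + v ⟨2, by omega⟩
        else v ⟨((i.succ : Fin (m+1)) : ℕ) + 2, by have := i.succ.isLt; omega⟩)
        = fun j : Fin m => v ⟨(j : ℕ) + 3, by omega⟩ := by
      funext i
      simp only [Fin.val_succ, Nat.succ_ne_zero, if_false]
    rw [h2]
    have h3 : (if ((0 : Fin (m+1)) : ℕ) = 0 then a + v ⟨2, by omega⟩
        else v ⟨((0 : Fin (m+1)) : ℕ) + 2, by omega⟩) = a + v ⟨2, by omega⟩ := by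
      simp
    rw [h3, mul_neg, neg_neg]
  have hbij : ∀ a : F,
      Set.BijOn
        (fun (v : Fin (m + 3) → F) (j : Fin (m + 1)) =>
          if (j : ℕ) = 0 then a + v ⟨2, by omega⟩
          else v ⟨(j : ℕ) + 2, by have := j.isLt; omega⟩)
        {v : Fin (m + 3) → F | v ⟨0, by omega⟩ = a ∧ v ⟨1, by omega⟩ = 0 ∧ M v = B}
        {w : Fin (m + 1) → F | M w = -B} := by
    intro a
    refine ⟨?_, ?_, ?_⟩
    · intro v hv
      obtain ⟨h0, h1, hM⟩ := hv
      show M _ = -B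
      rw [key a v h0 h1, hM]
    · intro v hv v' hv' heq
      obtain ⟨h0, h1, _⟩ := hv
      obtain ⟨h0', h1', _⟩ := hv'
      funext i
      rcases i with ⟨i, hi⟩
      rcases Nat.lt_or_ge i 3 with h3 | h3
      · interval_cases i
        · rw [h0, h0']
        · rw [h1, h1']
        · have := congrFun heq ⟨0, by omega⟩
          simp only at this
          exact add_left_cancel this
      · have := congrFun heq ⟨i - 2, by omega⟩
        simp only [Nat.sub_eq_zero_iff_le] at this
        rw [if_neg (by omega), if_neg (by omega)] at this
        have e : (⟨i - 2 + 2, by omega⟩ : Fin (m + 3)) = ⟨i, hi⟩ := by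
          ext; simp; omega
        rwa [e] at this
    · intro w hw
      set v : Fin (m + 3) → F := fun i =>
        if (i : ℕ) = 0 then a
        else if (i : ℕ) = 1 then 0
        else if (i : ℕ) = 2 then w ⟨0, by omega⟩ - a
        else w ⟨(i : ℕ) - 2, by have := i.isLt; omega⟩ with hv
      have hv0 : v ⟨0, by omega⟩ = a := by simp [hv]
      have hv1 : v ⟨1, by omega⟩ = 0 := by simp [hv]
      have hfw : (fun j : Fin (m + 1) =>
          if (j : ℕ) = 0 then a + v ⟨2, by omega⟩
          else v ⟨(j : ℕ) + 2, by have := j.isLt; omega⟩) = w := by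
        funext j
        rcases j with ⟨j, hj⟩
        by_cases hj0 : j = 0
        · subst hj0
          simp only [if_pos rfl, hv]
          norm_num
        · simp only [if_neg hj0, hv]
          rw [if_neg (by omega), if_neg (by omega), if_neg (by omega)]
          rfl
      have hMv : M v = B := by
        have := key a v hv0 hv1
        rw [hfw, hw] at this
        have := this.symm
        rw [neg_eq_iff_eq_neg] at this
        rw [this, neg_neg]
      exact ⟨v, ⟨hv0, hv1, hMv⟩, hfw⟩
  refine ⟨hbij, ?_⟩
  let g : {v : Fin (m + 3) → F // v ⟨1, by omega⟩ = 0 ∧ M v = B} →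
      F × {w : Fin (m + 1) → F // M w = -B} := fun v =>
    (v.1 ⟨0, by omega⟩,
      ⟨fun j : Fin (m + 1) =>
        if (j : ℕ) = 0 then v.1 ⟨0, by omega⟩ + v.1 ⟨2, by omega⟩
        else v.1 ⟨(j : ℕ) + 2, by have := j.isLt; omega⟩,
      (hbij (v.1 ⟨0, by omega⟩)).mapsTo ⟨rfl, v.2.1, v.2.2⟩⟩)
  have hg : Function.Bijective g := by
    constructor
    · rintro ⟨v, h1, hM⟩ ⟨v', h1', hM'⟩ heq
      have ha : v ⟨0, by omega⟩ = v' ⟨0, by omega⟩ := congrArg Prod.fst heq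
      have hsnd : ((g ⟨v, ⟨h1, hM⟩⟩).2 : Fin (m + 1) → F)
          = ((g ⟨v', ⟨h1', hM'⟩⟩).2 : Fin (m + 1) → F) := by rw [heq]
      simp only [g] at hsnd
      rw [← ha] at hsnd
      exact Subtype.ext
        ((hbij (v ⟨0, by omega⟩)).injOn ⟨rfl, h1, hM⟩ ⟨ha.symm, h1', hM'⟩ hsnd)
    · rintro ⟨a, w, hw⟩
      obtain ⟨v, hv, hfv⟩ := (hbij a).surjOn hw
      obtain ⟨h0, h1, hM⟩ := hv
      refine ⟨⟨v, h1, hM⟩, ?_⟩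
      simp only [g, Prod.mk.injEq, Subtype.mk.injEq]
      refine ⟨h0, ?_⟩
      rw [h0]
      exact hfv
  calc Nat.card {v : Fin (m + 3) → F // v ⟨1, by omega⟩ = 0 ∧ M v = B}
      = Nat.card (F × {w : Fin (m + 1) → F // M w = -B}) :=
        Nat.card_congr (Equiv.ofBijective g hg)
    _ = Nat.card F * Nat.card {w : Fin (m + 1) → F // M w = -B} := Nat.card_prod _ _
    _ = Fintype.card F * Nat.card {w : Fin (m + 1) → F // M w = -B} := by
        rw [Nat.card_eq_fintype_card]
end

section
/- Let q be a power of an odd prime and n = 2m with n > 4. Let u_n^+ (resp. u_n^-) denote the number of n-tuples in F_q^n with M_n product equal to Id (resp. -Id). Then u_{2m}^+ = (q-1)·u_{2m-1}^+ + q·u_{2m-2}^-. -/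
namespace Stmt14Aux

def matinv {A : Type*} [CommRing A] (x : A) : Matrix (Fin 2) (Fin 2) A := !![0, 1; -1, x]

set_option linter.unusedSectionVars false

variable {F : Type*} [Field F] [Fintype F]

lemma mat_mul_matinv (x : F) : mat x * matinv x = 1 := by
  simp [mat, matinv, Matrix.mul_fin_two, Matrix.one_fin_two]

lemma matinv_mul_mat (x : F) : matinv x * mat x = 1 := by
  simp [mat, matinv, Matrix.mul_fin_two, Matrix.one_fin_two]

/-- The counting function. -/
noncomputable def Ncard (k : ℕ) (A : Matrix (Fin 2) (Fin 2) F) : ℕ := Nat.card {a : Fin k → F // M a = A}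

lemma M_cons {k : ℕ} (x : F) (b : Fin k → F) : M (Fin.cons x b) = M b * mat x := by
  unfold M
  rw [List.ofFn_succ]
  simp [List.reverse_cons]

lemma card_sigma_nat {ι : Type*} [Fintype ι] {β : ι → Type*} [∀ i, Finite (β i)] :
    Nat.card (Σ i, β i) = ∑ i, Nat.card (β i) := by
  classical
  letI : ∀ i, Fintype (β i) := fun i => Fintype.ofFinite _
  simp [Nat.card_eq_fintype_card]

lemma N_succ (k : ℕ) (A : Matrix (Fin 2) (Fin 2) F) :
    Ncard (k + 1) A = ∑ x : F, Ncard k (A * matinv x) := by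
  classical
  have e : {a : Fin (k+1) → F // M a = A} ≃ Σ x : F, {b : Fin k → F // M b = A * matinv x} := by
    refine ⟨fun a => ⟨a.1 0, Fin.tail a.1, ?_⟩, fun p => ⟨Fin.cons p.1 p.2.1, ?_⟩, ?_, ?_⟩
    · have h : M (Fin.tail a.1) * mat (a.1 0) = A := by
        rw [← M_cons, Fin.cons_self_tail]; exact a.2
      calc M (Fin.tail a.1) = (M (Fin.tail a.1) * mat (a.1 0)) * matinv (a.1 0) := by
            rw [Matrix.mul_assoc, mat_mul_matinv, Matrix.mul_one]
        _ = A * matinv (a.1 0) := by rw [h]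
    · have h := p.2.2
      rw [M_cons, h, Matrix.mul_assoc, matinv_mul_mat, Matrix.mul_one]
    · intro a
      exact Subtype.ext (Fin.cons_self_tail a.1)
    · rintro ⟨x, b, hb⟩
      rfl
  rw [Ncard, Nat.card_congr e, card_sigma_nat]
  rfl

lemma det_mul_matinv (A : Matrix (Fin 2) (Fin 2) F) (x : F) :
    (A * matinv x).det = A.det := by
  rw [Matrix.det_mul]
  simp [matinv, Matrix.det_fin_two_of]

lemma entry11 (A : Matrix (Fin 2) (Fin 2) F) (x : F) :
    (A * matinv x) 1 1 = A 1 0 + A 1 1 * x := by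
  simp [matinv, Matrix.mul_apply, Fin.sum_univ_two]

lemma entry10 (A : Matrix (Fin 2) (Fin 2) F) (x : F) :
    (A * matinv x) 1 0 = -(A 1 1) := by
  simp [matinv, Matrix.mul_apply, Fin.sum_univ_two]

lemma sum_affine (c d : F) (hd : d ≠ 0) (f : F → ℕ) :
    ∑ x : F, f (c + d * x) = ∑ y : F, f y := by
  refine Fintype.sum_bijective (fun x : F => c + d * x) ?_ _ _ (fun x => rfl)
  have hinj : Function.Injective (fun x : F => c + d * x) := by
    intro u v h
    simp only [add_right_inj] at h
    exact mul_left_cancel₀ hd h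
  exact Finite.injective_iff_bijective.mp hinj

lemma sum_two [DecidableEq F] (U Mn : ℕ) :
    ∑ y : F, (if y = 0 then U else Mn) = U + (Fintype.card F - 1) * Mn := by
  rw [← Finset.add_sum_erase _ _ (Finset.mem_univ (0 : F))]
  rw [if_pos rfl]
  congr 1
  have h : ∀ y ∈ Finset.univ.erase (0 : F), (if y = 0 then U else Mn) = Mn := by
    intro y hy
    rw [if_neg (Finset.mem_erase.mp hy).1]
  rw [Finset.sum_congr rfl h, Finset.sum_const, Finset.card_erase_of_mem (Finset.mem_univ _),
    Finset.card_univ, smul_eq_mul]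

lemma sum_three [DecidableEq F] (σ : F) (hσ : σ ≠ 0) (Z S Mn : ℕ) :
    ∑ y : F, (if y = 0 then Z else if y = σ then S else Mn)
      = Z + S + (Fintype.card F - 2) * Mn := by
  rw [← Finset.add_sum_erase _ _ (Finset.mem_univ (0 : F))]
  have hσm : σ ∈ Finset.univ.erase (0 : F) :=
    Finset.mem_erase.mpr ⟨hσ, Finset.mem_univ _⟩
  rw [← Finset.add_sum_erase _ _ hσm]
  rw [if_pos rfl, if_neg hσ, if_pos rfl]
  have h : ∀ y ∈ (Finset.univ.erase (0 : F)).erase σ,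
      (if y = 0 then Z else if y = σ then S else Mn) = Mn := by
    intro y hy
    rw [Finset.mem_erase, Finset.mem_erase] at hy
    rw [if_neg hy.2.1, if_neg hy.1]
  rw [Finset.sum_congr rfl h, Finset.sum_const, Finset.card_erase_of_mem hσm,
    Finset.card_erase_of_mem (Finset.mem_univ _), Finset.card_univ, smul_eq_mul,
    Nat.sub_sub]
  generalize (Fintype.card F - 2) * Mn = w
  omega

/-- triples of values (main, zero-case, special-case) -/
def stepOE (q : ℕ) (t : ℕ × ℕ × ℕ) : ℕ × ℕ × ℕ :=
  ((q - 1) * t.1 + t.2.1, q * t.1, (q - 1) * t.1 + t.2.2)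

def stepEO (q : ℕ) (t : ℕ × ℕ × ℕ) : ℕ × ℕ × ℕ :=
  (t.2.1 + t.2.2 + (q - 2) * t.1, q * t.1, q * t.2.2)

def oddT (q : ℕ) : ℕ → ℕ × ℕ × ℕ
  | 0 => (0, 0, 1)
  | j + 1 => stepEO q (stepOE q (oddT q j))

def evenT (q : ℕ) (j : ℕ) : ℕ × ℕ × ℕ := stepOE q (oddT q j)

lemma zero_of_det (A : Matrix (Fin 2) (Fin 2) F) (hA : A.det = 1) (hd : A 1 1 = 0) :
    A 1 0 ≠ 0 := by
  intro h
  rw [Matrix.det_fin_two, hd, h] at hA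
  simp at hA

/-- odd shape implies even shape one step up -/
lemma step_oe [DecidableEq F] (k : ℕ) (σ : F) (t : ℕ × ℕ × ℕ)
    (H : ∀ A : Matrix (Fin 2) (Fin 2) F, A.det = 1 →
      Ncard k A = if A 1 1 = 0 then (if A 1 0 = σ then t.2.2 else t.2.1) else t.1) :
    ∀ A : Matrix (Fin 2) (Fin 2) F, A.det = 1 →
      Ncard (k + 1) A =
        if A 1 1 = 0 then (stepOE (Fintype.card F) t).2.1
        else if A 1 1 = -σ then (stepOE (Fintype.card F) t).2.2
        else (stepOE (Fintype.card F) t).1 := by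
  intro A hA
  rw [N_succ]
  have hB : ∀ x : F, Ncard k (A * matinv x) =
      if A 1 0 + A 1 1 * x = 0 then (if -(A 1 1) = σ then t.2.2 else t.2.1) else t.1 := by
    intro x
    rw [H _ (by rw [det_mul_matinv]; exact hA), entry11, entry10]
  simp only [hB]
  by_cases hd : A 1 1 = 0
  · have hc := zero_of_det A hA hd
    rw [if_pos hd]
    have hcon : ∀ x : F,
        (if A 1 0 + A 1 1 * x = 0 then (if -(A 1 1) = σ then t.2.2 else t.2.1) else t.1)
          = t.1 := by
      intro x
      rw [hd]
      simp [hc]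
    simp only [hcon, Finset.sum_const, Finset.card_univ, smul_eq_mul]
    rfl
  · rw [if_neg hd]
    have haff := sum_affine (A 1 0) (A 1 1) hd
      (fun y => if y = 0 then (if -(A 1 1) = σ then t.2.2 else t.2.1) else t.1)
    rw [haff, sum_two]
    by_cases hs : A 1 1 = -σ
    · rw [if_pos hs, if_pos (by rw [hs]; ring)]
      show t.2.2 + (Fintype.card F - 1) * t.1 = (Fintype.card F - 1) * t.1 + t.2.2
      exact Nat.add_comm _ _
    · rw [if_neg hs, if_neg (by intro h; exact hs (by rw [← h]; ring))]
      show t.2.1 + (Fintype.card F - 1) * t.1 = (Fintype.card F - 1) * t.1 + t.2.1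
      exact Nat.add_comm _ _

/-- even shape implies odd shape one step up -/
lemma step_eo [DecidableEq F] (k : ℕ) (σ : F) (hσ : σ ≠ 0) (t : ℕ × ℕ × ℕ)
    (H : ∀ A : Matrix (Fin 2) (Fin 2) F, A.det = 1 →
      Ncard k A = if A 1 1 = 0 then t.2.1 else if A 1 1 = σ then t.2.2 else t.1) :
    ∀ A : Matrix (Fin 2) (Fin 2) F, A.det = 1 →
      Ncard (k + 1) A =
        if A 1 1 = 0 then
          (if A 1 0 = σ then (stepEO (Fintype.card F) t).2.2
            else (stepEO (Fintype.card F) t).2.1)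
        else (stepEO (Fintype.card F) t).1 := by
  intro A hA
  rw [N_succ]
  have hB : ∀ x : F, Ncard k (A * matinv x) =
      if A 1 0 + A 1 1 * x = 0 then t.2.1
      else if A 1 0 + A 1 1 * x = σ then t.2.2 else t.1 := by
    intro x
    rw [H _ (by rw [det_mul_matinv]; exact hA), entry11]
  simp only [hB]
  by_cases hd : A 1 1 = 0
  · have hc := zero_of_det A hA hd
    rw [if_pos hd]
    have hcon : ∀ x : F,
        (if A 1 0 + A 1 1 * x = 0 then t.2.1
          else if A 1 0 + A 1 1 * x = σ then t.2.2 else t.1)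
          = if A 1 0 = σ then t.2.2 else t.1 := by
      intro x
      rw [hd]
      simp [hc]
    simp only [hcon, Finset.sum_const, Finset.card_univ, smul_eq_mul]
    by_cases hs : A 1 0 = σ
    · rw [if_pos hs, if_pos hs]; rfl
    · rw [if_neg hs, if_neg hs]; rfl
  · rw [if_neg hd]
    have haff := sum_affine (A 1 0) (A 1 1) hd
      (fun y => if y = 0 then t.2.1 else if y = σ then t.2.2 else t.1)
    rw [haff, sum_three σ hσ]
    rfl

lemma N_one [DecidableEq F] :
    ∀ A : Matrix (Fin 2) (Fin 2) F, A.det = 1 →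
      Ncard 1 A = if A 1 1 = 0 then (if A 1 0 = 1 then 1 else 0) else 0 := by
  intro A hA
  have hM : ∀ a : Fin 1 → F, M a = mat (a 0) := by
    intro a
    unfold M
    rw [List.ofFn_succ]
    simp
  by_cases hd : A 1 1 = 0
  · by_cases hc : A 1 0 = 1
    · rw [if_pos hd, if_pos hc]
      have hb : A 0 1 = -1 := by
        rw [Matrix.det_fin_two, hd, hc] at hA
        linear_combination -hA
      have hiff : ∀ a : Fin 1 → F, M a = A ↔ a = fun _ => A 0 0 := by
        intro a
        rw [hM]
        constructor
        · intro h
          funext i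
          have hi : i = 0 := Subsingleton.elim _ _
          rw [hi]
          have := congrArg (fun B : Matrix (Fin 2) (Fin 2) F => B 0 0) h
          simpa [mat] using this
        · rintro rfl
          ext i j
          fin_cases i <;> fin_cases j <;> simp [mat, hb, hc, hd]
      have e : {a : Fin 1 → F // M a = A} ≃ PUnit.{1} := by
        refine ⟨fun _ => PUnit.unit, fun _ => ⟨fun _ => A 0 0, (hiff _).mpr rfl⟩, ?_, fun _ => rfl⟩
        rintro ⟨a, ha⟩
        exact Subtype.ext ((hiff a).mp ha).symm
      rw [Ncard, Nat.card_congr e, Nat.card_unique]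
    · rw [if_pos hd, if_neg hc]
      have : IsEmpty {a : Fin 1 → F // M a = A} := by
        refine ⟨fun a => hc ?_⟩
        have h := a.2
        rw [hM] at h
        have := congrArg (fun B : Matrix (Fin 2) (Fin 2) F => B 1 0) h
        simpa [mat] using this.symm
      rw [Ncard, Nat.card_of_isEmpty]
  · rw [if_neg hd]
    have : IsEmpty {a : Fin 1 → F // M a = A} := by
      refine ⟨fun a => hd ?_⟩
      have h := a.2
      rw [hM] at h
      have := congrArg (fun B : Matrix (Fin 2) (Fin 2) F => B 1 1) h
      simpa [mat] using this.symm
    rw [Ncard, Nat.card_of_isEmpty]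

lemma neg_one_pow_ne_zero (j : ℕ) : ((-1 : F)) ^ j ≠ 0 :=
  pow_ne_zero _ (neg_ne_zero.mpr one_ne_zero)

lemma shape [DecidableEq F] (j : ℕ) :
    (∀ A : Matrix (Fin 2) (Fin 2) F, A.det = 1 →
        Ncard (2 * j + 1) A =
          if A 1 1 = 0 then
            (if A 1 0 = (-1 : F) ^ j then (oddT (Fintype.card F) j).2.2
              else (oddT (Fintype.card F) j).2.1)
          else (oddT (Fintype.card F) j).1)
    ∧ (∀ A : Matrix (Fin 2) (Fin 2) F, A.det = 1 →
        Ncard (2 * j + 2) A =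
          if A 1 1 = 0 then (evenT (Fintype.card F) j).2.1
          else if A 1 1 = (-1 : F) ^ (j + 1) then (evenT (Fintype.card F) j).2.2
          else (evenT (Fintype.card F) j).1) := by
  induction j with
  | zero =>
    have hbase : ∀ A : Matrix (Fin 2) (Fin 2) F, A.det = 1 →
        Ncard (2 * 0 + 1) A =
          if A 1 1 = 0 then
            (if A 1 0 = (-1 : F) ^ 0 then (oddT (Fintype.card F) 0).2.2
              else (oddT (Fintype.card F) 0).2.1)
          else (oddT (Fintype.card F) 0).1 := by
      intro A hA
      have := N_one A hA
      simpa [oddT] using this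
    refine ⟨hbase, ?_⟩
    intro A hA
    have hs := step_oe (2 * 0 + 1) ((-1 : F) ^ 0) (oddT (Fintype.card F) 0)
      (fun A hA => by simpa using hbase A hA) A hA
    rw [show (2 * 0 + 1 + 1 : ℕ) = 2 * 0 + 2 from rfl] at hs
    rw [hs]
    simp [evenT, pow_one, pow_zero]
  | succ j ih =>
    have hodd : ∀ A : Matrix (Fin 2) (Fin 2) F, A.det = 1 →
        Ncard (2 * (j + 1) + 1) A =
          if A 1 1 = 0 then
            (if A 1 0 = (-1 : F) ^ (j + 1) then (oddT (Fintype.card F) (j + 1)).2.2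
              else (oddT (Fintype.card F) (j + 1)).2.1)
          else (oddT (Fintype.card F) (j + 1)).1 := by
      intro A hA
      have hs := step_eo (2 * j + 2) ((-1 : F) ^ (j + 1)) (neg_one_pow_ne_zero _)
        (evenT (Fintype.card F) j) ih.2 A hA
      rw [show (2 * j + 2 + 1 : ℕ) = 2 * (j + 1) + 1 by ring] at hs
      rw [hs]
      show _ = if A 1 1 = 0 then _ else (oddT (Fintype.card F) (j + 1)).1
      rw [show oddT (Fintype.card F) (j + 1)
            = stepEO (Fintype.card F) (evenT (Fintype.card F) j) from rfl]
    refine ⟨hodd, ?_⟩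
    intro A hA
    have hs := step_oe (2 * (j + 1) + 1) ((-1 : F) ^ (j + 1))
      (oddT (Fintype.card F) (j + 1)) hodd A hA
    rw [show (2 * (j + 1) + 1 + 1 : ℕ) = 2 * (j + 1) + 2 by ring] at hs
    rw [hs]
    have hpow : (-1 : F) ^ (j + 1 + 1) = -((-1 : F) ^ (j + 1)) := by
      rw [pow_succ]; ring
    rw [hpow]
    rfl

lemma one_ne_neg_one (hq : Odd (Fintype.card F)) : (1 : F) ≠ -1 := by
  intro h
  have h2 : ((2 : ℕ) : F) = 0 := by push_cast; linear_combination h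
  have hdvd : ringChar F ∣ 2 := ringChar.dvd h2
  have h2' : ringChar F = 2 :=
    (Nat.prime_two.eq_one_or_self_of_dvd _ hdvd).resolve_left CharP.ringChar_ne_one
  have hcard := FiniteField.even_card_of_char_two h2'
  rw [Nat.odd_iff] at hq
  omega

end Stmt14Aux

theorem stmt14 {F : Type*} [Field F] [Fintype F] (hq : Odd (Fintype.card F))
    (n m : ℕ) (hnm : n = 2 * m) (hn : 4 < n) :
    Nat.card {a : Fin n → F // M a = 1} =
      (Fintype.card F - 1) * Nat.card {a : Fin (n - 1) → F // M a = 1} +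
        Fintype.card F * Nat.card {a : Fin (n - 2) → F // M a = -1} := by
  classical
  obtain ⟨m', rfl⟩ : ∃ m', m = m' + 3 := ⟨m - 3, by omega⟩
  subst hnm
  have h2 : 2 * (m' + 3) - 1 = 2 * (m' + 2) + 1 := by omega
  have h3 : 2 * (m' + 3) - 2 = 2 * (m' + 1) + 2 := by omega
  have h1 : 2 * (m' + 3) = 2 * (m' + 2) + 2 := by omega
  rw [h2, h3, h1]
  have S2 := (Stmt14Aux.shape (F := F) (m' + 2)).2
  have S1 := (Stmt14Aux.shape (F := F) (m' + 2)).1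
  have S0 := (Stmt14Aux.shape (F := F) (m' + 1)).2
  have det1 : (1 : Matrix (Fin 2) (Fin 2) F).det = 1 := by simp
  have detm1 : (-1 : Matrix (Fin 2) (Fin 2) F).det = 1 := by
    simp [Matrix.det_neg]
  have e11 : (1 : Matrix (Fin 2) (Fin 2) F) 1 1 = 1 := Matrix.one_apply_eq 1
  have em11 : (-1 : Matrix (Fin 2) (Fin 2) F) 1 1 = -1 := by
    simp [Matrix.neg_apply]
  have hne : (1 : F) ≠ -1 := Stmt14Aux.one_ne_neg_one hq
  have EA : Nat.card {a : Fin (2 * (m' + 2) + 1) → F // M a = 1}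
      = (Stmt14Aux.oddT (Fintype.card F) (m' + 2)).1 := by
    have hB := S1 1 det1
    rw [e11] at hB
    rwa [if_neg one_ne_zero] at hB
  rw [EA]
  rcases Nat.even_or_odd m' with hm | hm
  · have hp3 : (-1 : F) ^ (m' + 2 + 1) = -1 :=
      Odd.neg_one_pow (by rcases hm with ⟨w, hw⟩; exact ⟨w + 1, by omega⟩)
    have hp2 : (-1 : F) ^ (m' + 1 + 1) = 1 :=
      Even.neg_one_pow (by rcases hm with ⟨w, hw⟩; exact ⟨w + 1, by omega⟩)
    have EB : Nat.card {a : Fin (2 * (m' + 2) + 2) → F // M a = 1}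
        = (Stmt14Aux.evenT (Fintype.card F) (m' + 2)).1 := by
      have hB := S2 1 det1
      rw [e11, hp3] at hB
      rwa [if_neg one_ne_zero, if_neg hne] at hB
    have EC : Nat.card {a : Fin (2 * (m' + 1) + 2) → F // M a = -1}
        = (Stmt14Aux.evenT (Fintype.card F) (m' + 1)).1 := by
      have hB := S0 (-1) detm1
      rw [em11, hp2] at hB
      rwa [if_neg (by simp), if_neg (Ne.symm hne)] at hB
    rw [EB, EC]
    set t := Stmt14Aux.evenT (Fintype.card F) (m' + 1) with ht
    rw [show Stmt14Aux.oddT (Fintype.card F) (m' + 2) = Stmt14Aux.stepEO (Fintype.card F) t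
        from rfl,
      show Stmt14Aux.evenT (Fintype.card F) (m' + 2)
        = Stmt14Aux.stepOE (Fintype.card F) (Stmt14Aux.stepEO (Fintype.card F) t) from rfl]
    simp [Stmt14Aux.stepOE, Stmt14Aux.stepEO]
  · have hp3 : (-1 : F) ^ (m' + 2 + 1) = 1 :=
      Even.neg_one_pow (by rcases hm with ⟨w, hw⟩; exact ⟨w + 2, by omega⟩)
    have hp2 : (-1 : F) ^ (m' + 1 + 1) = -1 :=
      Odd.neg_one_pow (by rcases hm with ⟨w, hw⟩; exact ⟨w + 1, by omega⟩)
    have EB : Nat.card {a : Fin (2 * (m' + 2) + 2) → F // M a = 1}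
        = (Stmt14Aux.evenT (Fintype.card F) (m' + 2)).2.2 := by
      have hB := S2 1 det1
      rw [e11, hp3] at hB
      rwa [if_neg one_ne_zero, if_pos rfl] at hB
    have EC : Nat.card {a : Fin (2 * (m' + 1) + 2) → F // M a = -1}
        = (Stmt14Aux.evenT (Fintype.card F) (m' + 1)).2.2 := by
      have hB := S0 (-1) detm1
      rw [em11, hp2] at hB
      rwa [if_neg (by simp), if_pos rfl] at hB
    rw [EB, EC]
    set t := Stmt14Aux.evenT (Fintype.card F) (m' + 1) with ht
    rw [show Stmt14Aux.oddT (Fintype.card F) (m' + 2) = Stmt14Aux.stepEO (Fintype.card F) t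
        from rfl,
      show Stmt14Aux.evenT (Fintype.card F) (m' + 2)
        = Stmt14Aux.stepOE (Fintype.card F) (Stmt14Aux.stepEO (Fintype.card F) t) from rfl]
    simp [Stmt14Aux.stepOE, Stmt14Aux.stepEO]
end

section
/- Let q be a power of an odd prime and n > 4 odd. Then the number of n-tuples (a_1,...,a_n) in F_q^n with M_n(a_1,...,a_n) = Id equals (q^{n-1} - 1)/(q^2 - 1), and the same formula holds for M_n(a_1,...,a_n) = -Id. -/
namespace Stmt15Aux
noncomputable section
open Classical Finset

variable (F : Type*) [Field F] [Fintype F]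

abbrev W := Fin 2 → F

set_option linter.unusedSectionVars false

/-- "determinant" of the pair (v; u): det !![v 0, v 1; u 0, u 1]. -/
def D (u v : W F) : F := v 0 * u 1 - v 1 * u 0

variable {F}

lemma D_eq_zero_iff {u v : W F} : D F u v = 0 ↔ v 0 * u 1 = v 1 * u 0 := sub_eq_zero

lemma ne_zero_iff {u : W F} : u ≠ 0 ↔ u 0 ≠ 0 ∨ u 1 ≠ 0 := by
  constructor
  · intro hu
    by_contra hc
    push_neg at hc
    exact hu (funext fun i => by fin_cases i <;> simp [hc.1, hc.2])
  · rintro (h | h) rfl <;> simp at h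

lemma exists_smul_of_D_eq_zero {u x : W F} (hu : u ≠ 0) (h : D F u x = 0) :
    ∃ c : F, x = c • u := by
  rw [D_eq_zero_iff] at h
  rcases ne_zero_iff.1 hu with h0 | h1
  · refine ⟨x 0 / u 0, funext fun i => ?_⟩
    fin_cases i <;> simp [Pi.smul_apply, smul_eq_mul] <;> field_simp
    linear_combination -h
  · refine ⟨x 1 / u 1, funext fun i => ?_⟩
    fin_cases i <;> simp [Pi.smul_apply, smul_eq_mul] <;> field_simp
    linear_combination h

lemma smul_injective {u : W F} (hu : u ≠ 0) {c c' : F} (h : c • u = c' • u) : c = c' := by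
  by_contra hcc
  apply hu
  funext i
  have := congrFun h i
  simp only [Pi.smul_apply, smul_eq_mul] at this
  have : (c - c') * u i = 0 := by ring_nf; linear_combination this
  rcases mul_eq_zero.1 this with h' | h'
  · exact absurd (sub_eq_zero.1 h') hcc
  · simpa using h'

lemma D_add_right (u x y : W F) : D F u (x + y) = D F u x + D F u y := by
  simp [D]; ring

lemma D_smul_right (u : W F) (c : F) (x : W F) : D F u (c • x) = c * D F u x := by
  simp [D]; ring

/-- a particular solution of `D u w = 1`. -/
def sol (u : W F) : W F := if u 0 = 0 then ![(u 1)⁻¹, 0] else ![0, -(u 0)⁻¹]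

lemma D_sol {u : W F} (hu : u ≠ 0) : D F u (sol u) = 1 := by
  rcases eq_or_ne (u 0) 0 with h0 | h0
  · have h1 : u 1 ≠ 0 := by
      rcases ne_zero_iff.1 hu with h | h
      · exact absurd h0 h
      · exact h
    simp [sol, h0, D, inv_mul_cancel₀ h1]
  · simp [sol, h0, D]

end
end Stmt15Aux

namespace Stmt15Aux
noncomputable section
open Classical Finset
set_option linter.unusedSectionVars false

variable {F : Type*} [Field F] [Fintype F]

lemma D_self (u : W F) : D F u u = 0 := by simp [D]; ring

lemma D_sub_right (u x y : W F) : D F u (x - y) = D F u x - D F u y := by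
  simp [D]; ring

lemma sum_D_eq_one (u w : W F) (hu : u ≠ 0) (hw : D F u w = 1) (f : W F → ℚ) :
    ∑ x : W F, (if D F u x = 1 then f x else 0) = ∑ c : F, f (w + c • u) := by
  have key : ∀ x : W F, D F u x = 1 ↔ ∃ c : F, w + c • u = x := by
    intro x
    constructor
    · intro hx
      have : D F u (x - w) = 0 := by rw [D_sub_right, hx, hw, sub_self]
      obtain ⟨c, hc⟩ := exists_smul_of_D_eq_zero hu this
      exact ⟨c, by rw [← hc]; abel⟩
    · rintro ⟨c, rfl⟩
      rw [D_add_right, D_smul_right, hw, D_self, mul_zero, add_zero]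
  have himg : univ.filter (fun x => D F u x = 1) = univ.image (fun c : F => w + c • u) := by
    ext x
    simp [key x]
  rw [← Finset.sum_filter, himg, Finset.sum_image]
  intro c _ c' _ h
  exact smul_injective hu (by rwa [add_left_cancel_iff] at h)

lemma sum_prop (u : W F) (hu : u ≠ 0) (f : W F → ℚ) :
    ∑ x : W F, (if x ≠ 0 ∧ D F u x = 0 then f x else 0)
      = ∑ c : F, (if c ≠ 0 then f (c • u) else 0) := by
  have key : ∀ x : W F, (x ≠ 0 ∧ D F u x = 0) ↔ ∃ c : F, c ≠ 0 ∧ c • u = x := by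
    intro x
    constructor
    · rintro ⟨hx, hD⟩
      obtain ⟨c, hc⟩ := exists_smul_of_D_eq_zero hu hD
      refine ⟨c, fun h => hx (by simp [hc, h]), hc.symm⟩
    · rintro ⟨c, hc, rfl⟩
      refine ⟨fun h => ?_, by rw [D_smul_right, D_self, mul_zero]⟩
      rcases smul_eq_zero.1 h with h' | h'
      · exact hc h'
      · exact hu h'
  have himg : univ.filter (fun x : W F => x ≠ 0 ∧ D F u x = 0)
      = (univ.filter (fun c : F => c ≠ 0)).image (fun c : F => c • u) := by
    ext x
    simp only [mem_filter, mem_image, mem_univ, true_and]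
    rw [key x]
  rw [← Finset.sum_filter, himg, Finset.sum_image, Finset.sum_filter]
  intro c _ c' _ h
  exact smul_injective hu h

lemma sum_ne_zero_one :
    ∑ x : W F, (if x ≠ 0 then (1:ℚ) else 0) = (Fintype.card F : ℚ)^2 - 1 := by
  rw [Finset.sum_boole]
  rw [Finset.filter_ne', Finset.card_erase_of_mem (mem_univ 0), Finset.card_univ]
  have : Fintype.card (W F) = Fintype.card F ^ 2 := by
    simp [Fintype.card_fun]
  rw [this]
  have h1 : 1 ≤ Fintype.card F ^ 2 := Nat.one_le_iff_ne_zero.2 (by positivity)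
  push_cast [Nat.cast_sub h1]
  ring

end
end Stmt15Aux

namespace Stmt15Aux
noncomputable section
open Classical Finset Matrix
set_option linter.unusedSectionVars false

variable {F : Type*} [Field F] [Fintype F]

lemma D_comm (u v : W F) : D F u v = -D F v u := by simp [D]; ring
lemma D_u_zero (v : W F) : D F (0 : W F) v = 0 := by simp [D]
lemma D_zero_v (u : W F) : D F u (0 : W F) = 0 := by simp [D]
lemma D_neg_right (u v : W F) : D F u (-v) = -D F u v := by simp [D]; ring
lemma D_neg_left (u v : W F) : D F (-u) v = -D F u v := by simp [D]; ring
lemma D_add_left (x y v : W F) : D F (x + y) v = D F x v + D F y v := by simp [D]; ring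
lemma D_smul_left (c : F) (x v : W F) : D F (c • x) v = c * D F x v := by simp [D]; ring

lemma sum_unique (t a b : F) (ht : t ≠ 0) :
    ∑ c : F, (if a + c * t = b then (1:ℚ) else 0) = 1 := by
  have : ∀ c : F, (a + c * t = b) ↔ c = (b - a) / t := by
    intro c
    rw [eq_div_iff ht]
    constructor
    · intro h; linear_combination h
    · intro h; linear_combination h
  simp only [this]
  rw [Finset.sum_ite_eq' univ ((b - a)/t) (fun _ => (1:ℚ))]
  simp

lemma sum_collapse (w : W F) (f : W F → ℚ) :
    ∑ x : W F, (if x = w then f x else 0) = f w := by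
  rw [Finset.sum_ite_eq' univ w f]
  simp

lemma sum_ne_zero_F : ∑ c : F, (if c ≠ 0 then (1:ℚ) else 0) = (Fintype.card F : ℚ) - 1 := by
  rw [Finset.sum_boole, Finset.filter_ne', Finset.card_erase_of_mem (mem_univ 0),
    Finset.card_univ]
  have h1 : 1 ≤ Fintype.card F := Fintype.card_pos
  push_cast [Nat.cast_sub h1]
  ring

variable (F)

def TA : Matrix (W F) (W F) ℚ := Matrix.of fun u v => if D F u v = 1 then 1 else 0
def TJ : Matrix (W F) (W F) ℚ := Matrix.of fun u v => if u ≠ 0 ∧ v ≠ 0 then 1 else 0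
def TL : Matrix (W F) (W F) ℚ :=
  Matrix.of fun u v => if u ≠ 0 ∧ v ≠ 0 ∧ D F u v = 0 then 1 else 0
def TP : Matrix (W F) (W F) ℚ := Matrix.of fun u v => if u ≠ 0 ∧ v = -u then 1 else 0
def TI : Matrix (W F) (W F) ℚ := Matrix.of fun u v => if u ≠ 0 ∧ v = u then 1 else 0

end
end Stmt15Aux

namespace Stmt15Aux
noncomputable section
open Classical Finset Matrix
set_option linter.unusedSectionVars false

variable {F : Type*} [Field F] [Fintype F]

lemma TP_mul_TJ : TP F * TJ F = TJ F := by
  ext u v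
  simp only [Matrix.mul_apply, TP, TJ, of_apply]
  by_cases hu : u = 0
  · simp [hu]
  · have h1 : ∀ x : W F, (if u ≠ 0 ∧ x = -u then (1:ℚ) else 0) *
        (if x ≠ 0 ∧ v ≠ 0 then 1 else 0)
        = if x = -u then (if x ≠ 0 ∧ v ≠ 0 then (1:ℚ) else 0) else 0 := by
      intro x
      by_cases hx : x = -u <;> simp [hx, hu]
    rw [Finset.sum_congr rfl (fun x _ => h1 x), sum_collapse]
    simp [hu, neg_eq_zero]

lemma TP_mul_TL : TP F * TL F = TL F := by
  ext u v
  simp only [Matrix.mul_apply, TP, TL, of_apply]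
  by_cases hu : u = 0
  · simp [hu]
  · have h1 : ∀ x : W F, (if u ≠ 0 ∧ x = -u then (1:ℚ) else 0) *
        (if x ≠ 0 ∧ v ≠ 0 ∧ D F x v = 0 then 1 else 0)
        = if x = -u then (if x ≠ 0 ∧ v ≠ 0 ∧ D F x v = 0 then (1:ℚ) else 0) else 0 := by
      intro x
      by_cases hx : x = -u <;> simp [hx, hu]
    rw [Finset.sum_congr rfl (fun x _ => h1 x), sum_collapse]
    simp [hu, neg_eq_zero, D_neg_left]

lemma TP_mul_TP : TP F * TP F = TI F := by
  ext u v
  simp only [Matrix.mul_apply, TP, TI, of_apply]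
  by_cases hu : u = 0
  · simp [hu]
  · have h1 : ∀ x : W F, (if u ≠ 0 ∧ x = -u then (1:ℚ) else 0) *
        (if x ≠ 0 ∧ v = -x then 1 else 0)
        = if x = -u then (if x ≠ 0 ∧ v = -x then (1:ℚ) else 0) else 0 := by
      intro x
      by_cases hx : x = -u <;> simp [hx, hu]
    rw [Finset.sum_congr rfl (fun x _ => h1 x), sum_collapse]
    simp [hu, neg_eq_zero]

lemma TI_mul_TJ : TI F * TJ F = TJ F := by
  ext u v
  simp only [Matrix.mul_apply, TI, TJ, of_apply]
  by_cases hu : u = 0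
  · simp [hu]
  · have h1 : ∀ x : W F, (if u ≠ 0 ∧ x = u then (1:ℚ) else 0) *
        (if x ≠ 0 ∧ v ≠ 0 then 1 else 0)
        = if x = u then (if x ≠ 0 ∧ v ≠ 0 then (1:ℚ) else 0) else 0 := by
      intro x
      by_cases hx : x = u <;> simp [hx, hu]
    rw [Finset.sum_congr rfl (fun x _ => h1 x), sum_collapse]

lemma TI_mul_TL : TI F * TL F = TL F := by
  ext u v
  simp only [Matrix.mul_apply, TI, TL, of_apply]
  by_cases hu : u = 0
  · simp [hu]
  · have h1 : ∀ x : W F, (if u ≠ 0 ∧ x = u then (1:ℚ) else 0) *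
        (if x ≠ 0 ∧ v ≠ 0 ∧ D F x v = 0 then 1 else 0)
        = if x = u then (if x ≠ 0 ∧ v ≠ 0 ∧ D F x v = 0 then (1:ℚ) else 0) else 0 := by
      intro x
      by_cases hx : x = u <;> simp [hx, hu]
    rw [Finset.sum_congr rfl (fun x _ => h1 x), sum_collapse]

lemma TI_mul_TP : TI F * TP F = TP F := by
  ext u v
  simp only [Matrix.mul_apply, TI, TP, of_apply]
  by_cases hu : u = 0
  · simp [hu]
  · have h1 : ∀ x : W F, (if u ≠ 0 ∧ x = u then (1:ℚ) else 0) *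
        (if x ≠ 0 ∧ v = -x then 1 else 0)
        = if x = u then (if x ≠ 0 ∧ v = -x then (1:ℚ) else 0) else 0 := by
      intro x
      by_cases hx : x = u <;> simp [hx, hu]
    rw [Finset.sum_congr rfl (fun x _ => h1 x), sum_collapse]

lemma TL_mul_TP : TL F * TP F = TL F := by
  ext u v
  simp only [Matrix.mul_apply, TL, TP, of_apply]
  by_cases hv : v = 0
  · rw [Finset.sum_eq_zero (fun x _ => ?_)]
    · simp [hv]
    · by_cases hx : x = 0 <;> simp [hx, hv, zero_eq_neg]
  · have h1 : ∀ x : W F, (if u ≠ 0 ∧ x ≠ 0 ∧ D F u x = 0 then (1:ℚ) else 0) *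
        (if x ≠ 0 ∧ v = -x then 1 else 0)
        = if x = -v then (if u ≠ 0 ∧ x ≠ 0 ∧ D F u x = 0 then (1:ℚ) else 0) else 0 := by
      intro x
      by_cases hx : x = -v
      · subst hx
        simp [neg_eq_zero, hv, neg_neg]
      · have : v ≠ -x := fun h => hx (by rw [h, neg_neg])
        simp [this, hx]
    rw [Finset.sum_congr rfl (fun x _ => h1 x), sum_collapse]
    simp [hv, neg_eq_zero, D_neg_right]

lemma TJ_mul_TP : TJ F * TP F = TJ F := by
  ext u v
  simp only [Matrix.mul_apply, TJ, TP, of_apply]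
  by_cases hv : v = 0
  · rw [Finset.sum_eq_zero (fun x _ => ?_)]
    · simp [hv]
    · by_cases hx : x = 0 <;> simp [hx, hv, zero_eq_neg]
  · have h1 : ∀ x : W F, (if u ≠ 0 ∧ x ≠ 0 then (1:ℚ) else 0) *
        (if x ≠ 0 ∧ v = -x then 1 else 0)
        = if x = -v then (if u ≠ 0 ∧ x ≠ 0 then (1:ℚ) else 0) else 0 := by
      intro x
      by_cases hx : x = -v
      · subst hx
        simp [neg_eq_zero, hv, neg_neg]
      · have : v ≠ -x := fun h => hx (by rw [h, neg_neg])
        simp [this, hx]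
    rw [Finset.sum_congr rfl (fun x _ => h1 x), sum_collapse]
    simp [hv, neg_eq_zero]

end
end Stmt15Aux

namespace Stmt15Aux
noncomputable section
open Classical Finset Matrix
set_option linter.unusedSectionVars false

variable {F : Type*} [Field F] [Fintype F]

local notation "q" => (Fintype.card F : ℚ)

lemma TJ_mul_TJ : TJ F * TJ F = (q^2 - 1) • TJ F := by
  ext u v
  simp only [Matrix.mul_apply, Matrix.smul_apply, TJ, of_apply, smul_eq_mul]
  by_cases hu : u = 0
  · simp [hu]
  · by_cases hv : v = 0
    · simp [hv]
    · have h1 : ∀ x : W F, (if u ≠ 0 ∧ x ≠ 0 then (1:ℚ) else 0) *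
          (if x ≠ 0 ∧ v ≠ 0 then 1 else 0) = if x ≠ 0 then (1:ℚ) else 0 := by
        intro x
        by_cases hx : x = 0 <;> simp [hx, hu, hv]
      rw [Finset.sum_congr rfl (fun x _ => h1 x), sum_ne_zero_one]
      simp [hu, hv]

lemma TJ_mul_TL : TJ F * TL F = (q - 1) • TJ F := by
  ext u v
  simp only [Matrix.mul_apply, Matrix.smul_apply, TJ, TL, of_apply, smul_eq_mul]
  by_cases hu : u = 0
  · simp [hu]
  · by_cases hv : v = 0
    · simp [hv]
    · have h1 : ∀ x : W F, (if u ≠ 0 ∧ x ≠ 0 then (1:ℚ) else 0) *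
          (if x ≠ 0 ∧ v ≠ 0 ∧ D F x v = 0 then 1 else 0)
          = if x ≠ 0 ∧ D F v x = 0 then (1:ℚ) else 0 := by
        intro x
        have hcomm : D F x v = 0 ↔ D F v x = 0 := by
          rw [D_comm]; simp
        by_cases hx : x = 0
        · simp [hx]
        · by_cases hD : D F v x = 0 <;>
            simp [hx, hu, hv, hD, hcomm]
      rw [Finset.sum_congr rfl (fun x _ => h1 x), sum_prop v hv, sum_ne_zero_F]
      simp [hu, hv]

lemma TL_mul_TJ : TL F * TJ F = (q - 1) • TJ F := by
  ext u v
  simp only [Matrix.mul_apply, Matrix.smul_apply, TL, TJ, of_apply, smul_eq_mul]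
  by_cases hu : u = 0
  · simp [hu]
  · by_cases hv : v = 0
    · simp [hv]
    · have h1 : ∀ x : W F, (if u ≠ 0 ∧ x ≠ 0 ∧ D F u x = 0 then (1:ℚ) else 0) *
          (if x ≠ 0 ∧ v ≠ 0 then 1 else 0)
          = if x ≠ 0 ∧ D F u x = 0 then (1:ℚ) else 0 := by
        intro x
        by_cases hx : x = 0
        · simp [hx]
        · by_cases hD : D F u x = 0 <;> simp [hx, hu, hv, hD]
      rw [Finset.sum_congr rfl (fun x _ => h1 x), sum_prop u hu]
      rw [Finset.sum_congr rfl (fun c _ => rfl), sum_ne_zero_F]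
      simp [hu, hv]

lemma TL_mul_TL : TL F * TL F = (q - 1) • TL F := by
  ext u v
  simp only [Matrix.mul_apply, Matrix.smul_apply, TL, of_apply, smul_eq_mul]
  by_cases hu : u = 0
  · simp [hu]
  · have h1 : ∀ x : W F, (if u ≠ 0 ∧ x ≠ 0 ∧ D F u x = 0 then (1:ℚ) else 0) *
        (if x ≠ 0 ∧ v ≠ 0 ∧ D F x v = 0 then 1 else 0)
        = if x ≠ 0 ∧ D F u x = 0 then
            (if v ≠ 0 ∧ D F x v = 0 then (1:ℚ) else 0) else 0 := by
      intro x
      by_cases hx : x = 0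
      · simp [hx]
      · by_cases hD : D F u x = 0 <;> by_cases hv : v = 0 <;>
          simp [hx, hu, hD, hv]
    rw [Finset.sum_congr rfl (fun x _ => h1 x), sum_prop u hu]
    have h2 : ∀ c : F, (if c ≠ 0 then
        (if v ≠ 0 ∧ D F (c • u) v = 0 then (1:ℚ) else 0) else 0)
        = if c ≠ 0 then (if v ≠ 0 ∧ D F u v = 0 then (1:ℚ) else 0) else 0 := by
      intro c
      by_cases hc : c = 0
      · simp [hc]
      · have : D F (c • u) v = 0 ↔ D F u v = 0 := by
          rw [D_smul_left]
          simp [hc]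
        simp [hc, this]
    rw [Finset.sum_congr rfl (fun c _ => h2 c)]
    have h3 : ∑ c : F, (if c ≠ 0 then
        (if v ≠ 0 ∧ D F u v = 0 then (1:ℚ) else 0) else 0)
        = (q - 1) * (if v ≠ 0 ∧ D F u v = 0 then (1:ℚ) else 0) := by
      rw [← sum_ne_zero_F]
      rw [Finset.sum_mul]
      refine Finset.sum_congr rfl fun c _ => ?_
      by_cases hc : c = 0 <;> simp [hc]
    rw [h3]
    by_cases hv : v = 0
    · simp [hv]
    · by_cases hD : D F u v = 0 <;> simp [hu, hv, hD]

end
end Stmt15Aux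

namespace Stmt15Aux
noncomputable section
open Classical Finset Matrix
set_option linter.unusedSectionVars false

variable {F : Type*} [Field F] [Fintype F]

local notation "q" => (Fintype.card F : ℚ)

lemma TA_mul_TA : TA F * TA F = TJ F - TL F + q • TP F := by
  ext u v
  simp only [Matrix.mul_apply, Matrix.add_apply, Matrix.sub_apply, Matrix.smul_apply,
    TA, TJ, TL, TP, of_apply, smul_eq_mul]
  by_cases hu : u = 0
  · rw [Finset.sum_eq_zero (fun x _ => ?_)]
    · simp [hu]
    · rw [hu, D_u_zero]
      simp
  · have h1 : ∀ x : W F, (if D F u x = 1 then (1:ℚ) else 0) * (if D F x v = 1 then 1 else 0)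
        = if D F u x = 1 then (if D F x v = 1 then (1:ℚ) else 0) else 0 := by
      intro x
      by_cases h : D F u x = 1 <;> simp [h]
    rw [Finset.sum_congr rfl (fun x _ => h1 x),
      sum_D_eq_one u (sol u) hu (D_sol hu)]
    have h2 : ∀ c : F, D F (sol u + c • u) v = D F (sol u) v + c * D F u v := by
      intro c
      rw [D_add_left, D_smul_left]
    simp only [h2]
    by_cases hD : D F u v = 0
    · obtain ⟨b, rfl⟩ := exists_smul_of_D_eq_zero hu hD
      have hsol : D F (sol u) (b • u) = -b := by
        rw [D_smul_right, show D F (sol u) u = -D F u (sol u) from D_comm _ _,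
          D_sol hu]
        ring
      simp only [hsol, hD, mul_zero, add_zero]
      by_cases hb : b = -1
      · subst hb
        have hv : (-1 : F) • u = -u := by simp
        rw [Finset.sum_congr rfl (fun c _ => if_pos (by norm_num))]
        rw [Finset.sum_const, Finset.card_univ]
        have hvu : -u ≠ (0 : W F) := by simpa [neg_eq_zero] using hu
        simp [hv, hu, hvu, D_neg_right, D_self]
      · have hcond : (-b : F) ≠ 1 := fun h => hb (by linear_combination -h)
        rw [Finset.sum_eq_zero (fun c _ => if_neg hcond)]
        by_cases hb0 : b = 0
        · subst hb0
          simp [hu, zero_eq_neg]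
        · have hv : b • u ≠ (0 : W F) := fun h => by
            rcases smul_eq_zero.1 h with h' | h'
            · exact hb0 h'
            · exact hu h'
          have hvneg : b • u ≠ -u := fun h => by
            apply hb
            have : b • u = (-1 : F) • u := by rw [h]; simp
            exact smul_injective hu this
          simp [hu, hv, hvneg, hD]
    · rw [sum_unique (D F u v) (D F (sol u) v) 1 hD]
      have hv : v ≠ 0 := fun h => hD (by rw [h, D_zero_v])
      have hvneg : v ≠ -u := fun h => by
        apply hD
        rw [h, D_neg_right, D_self, neg_zero]
      simp [hu, hv, hvneg, hD]

end
end Stmt15Aux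

namespace Stmt15Aux
noncomputable section
open Classical Finset Matrix
set_option linter.unusedSectionVars false

variable {F : Type*} [Field F] [Fintype F]

local notation "q" => (Fintype.card F : ℚ)

lemma step_P (a b c : ℚ) : (a • TJ F - b • TL F + c • TP F) * (TJ F - TL F + q • TP F)
    = (q^2*a - (q-1)*b + c) • TJ F - (b + c) • TL F + (q*c) • TI F := by
  simp only [sub_mul, add_mul, mul_sub, mul_add, Matrix.smul_mul, Matrix.mul_smul,
    TJ_mul_TJ, TJ_mul_TL, TJ_mul_TP, TL_mul_TJ, TL_mul_TL, TL_mul_TP,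
    TP_mul_TJ, TP_mul_TL, TP_mul_TP, smul_smul]
  module

lemma step_I (a b c : ℚ) : (a • TJ F - b • TL F + c • TI F) * (TJ F - TL F + q • TP F)
    = (q^2*a - (q-1)*b + c) • TJ F - (b + c) • TL F + (q*c) • TP F := by
  simp only [sub_mul, add_mul, mul_sub, mul_add, Matrix.smul_mul, Matrix.mul_smul,
    TJ_mul_TJ, TJ_mul_TL, TJ_mul_TP, TL_mul_TJ, TL_mul_TL, TL_mul_TP,
    TI_mul_TJ, TI_mul_TL, TI_mul_TP, smul_smul]
  module

lemma TA_pow : ∀ m : ℕ, 1 ≤ m → ∃ C, (C = TP F ∨ C = TI F) ∧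
    TA F ^ (2*m) = (∑ i ∈ Finset.range m, q^(2*i)) • TJ F
      - (∑ i ∈ Finset.range m, q^i) • TL F + (q^m) • C := by
  intro m
  induction m with
  | zero => omega
  | succ m ih =>
    intro _
    by_cases hm0 : m = 0
    · subst hm0
      refine ⟨TP F, Or.inl rfl, ?_⟩
      rw [show 2*1 = 2 by norm_num, pow_two, TA_mul_TA]
      simp
    · obtain ⟨C, hC, hE⟩ := ih (by omega)
      have hJ : q^2 * (∑ i ∈ Finset.range m, q^(2*i))
          - (q-1) * (∑ i ∈ Finset.range m, q^i) + q^m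
          = ∑ i ∈ Finset.range (m+1), q^(2*i) := by
        have h1 : (q - 1) * ∑ i ∈ Finset.range m, q^i = q^m - 1 := mul_comm (∑ i ∈ Finset.range m, q^i) (q-1) ▸ geom_sum_mul q m
        have h2 : ∀ k, ∑ i ∈ Finset.range k, q^(2*i) = ∑ i ∈ Finset.range k, (q^2)^i := by
          intro k
          exact Finset.sum_congr rfl fun i _ => pow_mul q 2 i
        have h3 : ∑ i ∈ Finset.range (m+1), (q^2)^i
            = q^2 * (∑ i ∈ Finset.range m, (q^2)^i) + 1 := geom_sum_succ
        rw [h1, h2, h2, h3]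
        ring
      have hL : (∑ i ∈ Finset.range m, q^i) + q^m = ∑ i ∈ Finset.range (m+1), q^i := by
        rw [Finset.sum_range_succ]
      have hpow : 2*(m+1) = 2*m + 2 := by ring
      rcases hC with rfl | rfl
      · refine ⟨TI F, Or.inr rfl, ?_⟩
        rw [hpow, pow_add, hE, pow_two, TA_mul_TA, step_P, hJ, hL, ← pow_succ']
      · refine ⟨TP F, Or.inl rfl, ?_⟩
        rw [hpow, pow_add, hE, pow_two, TA_mul_TA, step_I, hJ, hL, ← pow_succ']

end
end Stmt15Aux

namespace Stmt15Aux
noncomputable section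
open Classical Finset Matrix
set_option linter.unusedSectionVars false

variable {F : Type*} [Field F] [Fintype F]

lemma M_one (a : Fin 1 → F) : M a = mat (a 0) := by
  unfold M
  simp

lemma M_succ {m : ℕ} (f : Fin (m+1) → F) : M f = mat (f (Fin.last m)) * M (Fin.init f) := by
  unfold M
  rw [List.ofFn_succ']
  simp only [List.concat_eq_append, List.map_append, List.reverse_append, List.map_cons,
    List.map_nil, List.reverse_cons, List.reverse_nil, List.nil_append, List.cons_append,
    List.prod_cons]
  rfl

def N (b : F) : Matrix (Fin 2) (Fin 2) F := !![0,1;-1,b]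

lemma N_mul_mat (b : F) : N b * mat b = 1 := by
  rw [N, mat]
  ext i j
  fin_cases i <;> fin_cases j <;>
    simp [Matrix.mul_apply, Fin.sum_univ_two]

lemma mat_mul_N (b : F) : mat b * N b = 1 := by
  rw [N, mat]
  ext i j
  fin_cases i <;> fin_cases j <;>
    simp [Matrix.mul_apply, Fin.sum_univ_two]

lemma row_one_ne_zero {g : Matrix (Fin 2) (Fin 2) F} (hg : g.det = 1) : g 1 ≠ 0 := by
  intro h
  have h0 : g 1 0 = 0 := by rw [h]; rfl
  have h1 : g 1 1 = 0 := by rw [h]; rfl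
  rw [Matrix.det_fin_two, h0, h1] at hg
  simp at hg

lemma count (m : ℕ) : ∀ g : Matrix (Fin 2) (Fin 2) F,
    (Nat.card {a : Fin (m+1) → F // M a = g} : ℚ)
      = if g.det = 1 then (TA F ^ m) ![1,0] (g 1) else 0 := by
  induction m with
  | zero =>
    intro g
    have e : {a : Fin 1 → F // M a = g} ≃ {b : F // mat b = g} :=
      { toFun := fun p => ⟨p.1 0, by rw [← M_one]; exact p.2⟩
        invFun := fun p => ⟨fun _ => p.1, by rw [M_one]; exact p.2⟩
        left_inv := fun p => Subtype.ext (funext fun i => by fin_cases i; rfl)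
        right_inv := fun p => rfl }
    rw [Nat.card_congr e]
    have hmat : ∀ b : F, mat b = g ↔ b = g 0 0 ∧ mat (g 0 0) = g := by
      intro b
      constructor
      · intro h
        have hb : b = g 0 0 := by rw [← h]; simp [mat]
        exact ⟨hb, by rw [← hb]; exact h⟩
      · rintro ⟨rfl, h⟩; exact h
    have hiff : (g.det = 1 ∧ (![1,0] : W F) = g 1) ↔ mat (g 0 0) = g := by
      constructor
      · rintro ⟨hdet, hrow⟩
        have h10 : g 1 0 = 1 := by rw [← hrow]; rfl
        have h11 : g 1 1 = 0 := by rw [← hrow]; rfl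
        have h01 : g 0 1 = -1 := by
          rw [Matrix.det_fin_two, h10, h11] at hdet
          linear_combination -hdet
        ext i j
        fin_cases i <;> fin_cases j <;> simp [mat, h01, h10, h11]
      · intro h
        constructor
        · rw [← h, Matrix.det_fin_two]
          simp [mat]
        · funext j
          rw [← h]
          fin_cases j <;> simp [mat]
    by_cases hg : mat (g 0 0) = g
    · have : ∀ b : F, mat b = g ↔ b = g 0 0 := by
        intro b
        rw [hmat b]
        simp [hg]
      have hcard : Nat.card {b : F // mat b = g} = 1 := by
        rw [Nat.card_eq_one_iff_unique]
        constructor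
        · constructor
          rintro ⟨b, hb⟩ ⟨b', hb'⟩
          simp only [Subtype.mk.injEq]
          rw [(this b).1 hb, (this b').1 hb']
        · exact ⟨⟨g 0 0, (this _).2 rfl⟩⟩
      rw [hcard]
      obtain ⟨hdet, hrow⟩ := hiff.2 hg
      rw [if_pos hdet, pow_zero, Matrix.one_apply, if_pos hrow]
      norm_num
    · have : ∀ b : F, ¬(mat b = g) := fun b h => hg ((hmat b).1 h).2
      have hcard : Nat.card {b : F // mat b = g} = 0 := by
        rw [Nat.card_eq_zero]
        left
        rw [isEmpty_subtype]
        exact this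
      rw [hcard]
      by_cases hdet : g.det = 1
      · rw [if_pos hdet, pow_zero, Matrix.one_apply, if_neg fun hrow => hg (hiff.1 ⟨hdet, hrow⟩)]
        norm_num
      · rw [if_neg hdet]
        norm_num
  | succ m ih =>
    intro g
    have e : {a : Fin (m+2) → F // M a = g}
        ≃ (b : F) × {a : Fin (m+1) → F // M a = N b * g} :=
      { toFun := fun p => ⟨p.1 (Fin.last (m+1)), ⟨Fin.init p.1, by
          have h := M_succ p.1
          rw [p.2] at h
          calc M (Fin.init p.1) = (N (p.1 (Fin.last (m+1))) * mat (p.1 (Fin.last (m+1))))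
                * M (Fin.init p.1) := by rw [N_mul_mat, one_mul]
            _ = N (p.1 (Fin.last (m+1))) * g := by rw [Matrix.mul_assoc, ← h]⟩⟩
        invFun := fun p => ⟨Fin.snoc p.2.1 p.1, by
          rw [M_succ]
          simp only [Fin.snoc_last, Fin.init_snoc]
          rw [p.2.2, ← Matrix.mul_assoc, mat_mul_N, one_mul]⟩
        left_inv := fun p => Subtype.ext (Fin.snoc_init_self p.1)
        right_inv := fun p => Sigma.subtype_ext (by simp) (by simp) }
    rw [Nat.card_congr e]
    have hsum : Nat.card ((b : F) × {a : Fin (m+1) → F // M a = N b * g})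
        = ∑ b : F, Nat.card {a : Fin (m+1) → F // M a = N b * g} := by
      simp [Nat.card_eq_fintype_card, Fintype.card_sigma]
    rw [hsum]
    push_cast
    rw [Finset.sum_congr rfl (fun b _ => ih (N b * g))]
    have hdetN : ∀ b : F, (N b * g).det = g.det := by
      intro b
      rw [Matrix.det_mul]
      have : (N b).det = 1 := by rw [N, Matrix.det_fin_two_of]; ring
      rw [this, one_mul]
    have hrowN : ∀ b : F, (N b * g) 1 = b • g 1 - g 0 := by
      intro b
      funext j
      simp [N, Matrix.mul_apply, Fin.sum_univ_two]
      ring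
    by_cases hdet : g.det = 1
    · simp only [hdetN, hrowN, if_pos hdet]
      have hg1 : g 1 ≠ 0 := row_one_ne_zero hdet
      have hg1' : -(g 1) ≠ 0 := by simpa [neg_eq_zero] using hg1
      have hw : D F (-(g 1)) (-(g 0)) = 1 := by
        simp only [D]
        rw [Matrix.det_fin_two] at hdet
        have : -(g 0) 0 = -g 0 0 := rfl
        simp only [Pi.neg_apply]
        linear_combination hdet
      rw [pow_succ, Matrix.mul_apply]
      have hDD : ∀ x : W F, D F x (g 1) = D F (-(g 1)) x := by
        intro x
        simp [D]
        ring
      have hstep : ∀ x : W F, (TA F ^ m) ![1,0] x * TA F x (g 1)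
          = if D F (-(g 1)) x = 1 then (TA F ^ m) ![1,0] x else 0 := by
        intro x
        rw [TA, of_apply, ← hDD x]
        by_cases h : D F x (g 1) = 1 <;> simp [h]
      rw [Finset.sum_congr rfl (fun x _ => hstep x),
        sum_D_eq_one (-(g 1)) (-(g 0)) hg1' hw]
      refine Fintype.sum_equiv (Equiv.neg F) _ _ (fun b => ?_)
      have hvec : b • g 1 - g 0 = -(g 0) + (-b) • (-(g 1)) := by
        funext j
        simp
        ring
      rw [Equiv.neg_apply, ← hvec]
    · simp only [hdetN, if_neg hdet]
      simp

end
end Stmt15Aux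

open Stmt15Aux in
theorem stmt15 {F : Type*} [Field F] [Fintype F] (hq : Odd (Fintype.card F))
    (n : ℕ) (hn : 4 < n) (hodd : Odd n) :
    (Nat.card {a : Fin n → F // M a = 1} : ℚ) =
        ((Fintype.card F : ℚ) ^ (n - 1) - 1) / ((Fintype.card F : ℚ) ^ 2 - 1) ∧
      (Nat.card {a : Fin n → F // M a = -1} : ℚ) =
        ((Fintype.card F : ℚ) ^ (n - 1) - 1) / ((Fintype.card F : ℚ) ^ 2 - 1) := by
  classical
  obtain ⟨m, rfl⟩ := hodd
  have hm : 2 ≤ m := by omega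
  have hq1 : (1:ℚ) < (Fintype.card F : ℚ) := by exact_mod_cast Fintype.one_lt_card
  have hq2ne : ((Fintype.card F : ℚ))^2 ≠ 1 := by nlinarith
  have hsub : 2*m + 1 - 1 = 2*m := by omega
  rw [hsub]
  have hgeom : (∑ i ∈ Finset.range m, (Fintype.card F : ℚ)^(2*i))
      = ((Fintype.card F : ℚ)^(2*m) - 1) / ((Fintype.card F : ℚ)^2 - 1) := by
    have h2 : ∀ i, (Fintype.card F : ℚ)^(2*i) = ((Fintype.card F : ℚ)^2)^i := fun i =>
      pow_mul _ 2 i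
    simp only [h2]
    rw [geom_sum_eq hq2ne]
  obtain ⟨C, hC, hE⟩ := TA_pow (F := F) m (by omega)
  have e1ne : (![1,0] : W F) ≠ 0 := by
    intro h
    have := congrFun h 0
    simp at this
  have h1row : ((1 : Matrix (Fin 2) (Fin 2) F)) 1 = ![0,1] := by
    funext j
    fin_cases j <;> simp [Matrix.one_apply]
  have hnegrow : ((-1 : Matrix (Fin 2) (Fin 2) F)) 1 = ![0,-1] := by
    funext j
    fin_cases j <;> simp [Matrix.one_apply]
  have hdet1 : (1 : Matrix (Fin 2) (Fin 2) F).det = 1 := Matrix.det_one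
  have hdetneg : (-1 : Matrix (Fin 2) (Fin 2) F).det = 1 := by
    rw [Matrix.det_fin_two]
    simp
  constructor
  · rw [show (2*m+1) = (2*m)+1 by ring] at *
    rw [count (2*m) 1, if_pos hdet1, h1row, hE]
    have hvne : (![0,1] : W F) ≠ 0 := by
      intro h
      have := congrFun h 1
      simp at this
    have hD : D F ![1,0] ![0,1] ≠ 0 := by
      simp [D]
    have hCzero : C ![1,0] ![0,1] = 0 := by
      rcases hC with rfl | rfl
      · rw [TP, Matrix.of_apply, if_neg]
        rintro ⟨-, h⟩
        have := congrFun h 1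
        simp at this
      · rw [TI, Matrix.of_apply, if_neg]
        rintro ⟨-, h⟩
        have := congrFun h 0
        simp at this
    simp only [Matrix.add_apply, Matrix.sub_apply, Matrix.smul_apply, smul_eq_mul,
      hCzero, mul_zero, add_zero, TJ, TL, Matrix.of_apply]
    rw [if_pos ⟨e1ne, hvne⟩, if_neg (fun h => hD h.2.2)]
    rw [hgeom]
    ring
  · rw [show (2*m+1) = (2*m)+1 by ring] at *
    rw [count (2*m) (-1), if_pos hdetneg, hnegrow, hE]
    have hvne : (![0,-1] : W F) ≠ 0 := by
      intro h
      have := congrFun h 1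
      simp at this
    have hD : D F ![1,0] ![0,-1] ≠ 0 := by
      simp [D]
    have hCzero : C ![1,0] ![0,-1] = 0 := by
      rcases hC with rfl | rfl
      · rw [TP, Matrix.of_apply, if_neg]
        rintro ⟨-, h⟩
        have := congrFun h 1
        simp at this
      · rw [TI, Matrix.of_apply, if_neg]
        rintro ⟨-, h⟩
        have := congrFun h 0
        simp at this
    simp only [Matrix.add_apply, Matrix.sub_apply, Matrix.smul_apply, smul_eq_mul,
      hCzero, mul_zero, add_zero, TJ, TL, Matrix.of_apply]
    rw [if_pos ⟨e1ne, hvne⟩, if_neg (fun h => hD h.2.2)]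
    rw [hgeom]
    ring
end

section
/- Let q be a power of an odd prime and n = 2m > 4. The number of n-tuples (a_1,...,a_n) in F_q^n with M_n(a_1,...,a_n) = Id equals (q-1)·(q^m-1)(q^{m-1}-1)/((q-1)(q^2-1)) + q^{m-1} if m is even, and equals (q-1)·(q^m-1)(q^{m-1}-1)/((q-1)(q^2-1)) if m is odd. -/
namespace Stmt16Aux

/-- inverse of `mat t` -/
def matInv {A : Type*} [CommRing A] (t : A) : Matrix (Fin 2) (Fin 2) A := !![0, 1; -1, t]

lemma matInv_mul_mat {A : Type*} [CommRing A] (t : A) : matInv t * mat t = 1 := by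
  simp [matInv, mat, Matrix.mul_fin_two, Matrix.one_fin_two]

lemma mat_mul_matInv {A : Type*} [CommRing A] (t : A) : mat t * matInv t = 1 := by
  simp [matInv, mat, Matrix.mul_fin_two, Matrix.one_fin_two]

lemma M_one {A : Type*} [CommRing A] (a : Fin 1 → A) : M a = mat (a 0) := by
  simp [M]

lemma M_snoc {A : Type*} [CommRing A] {k : ℕ} (a : Fin k → A) (t : A) :
    M (Fin.snoc a t) = mat t * M a := by
  unfold M
  rw [List.ofFn_succ' (Fin.snoc a t)]
  simp [Fin.init_snoc]

/-- state: (P, Q, O, bP, bQ, bO) -/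
structure S6 where
  P : ℚ
  Q : ℚ
  O : ℚ
  bP : ℚ
  bQ : ℚ
  bO : ℚ

def step (q : ℚ) (s : S6) : S6 where
  P := s.P + s.Q + (q - 3) * s.O + s.bP
  Q := s.P + s.Q + (q - 3) * s.O + s.bQ
  O := s.P + s.Q + (q - 3) * s.O + s.bO
  bP := q * s.Q
  bQ := q * s.P
  bO := q * s.O

def St (q : ℚ) : ℕ → S6
  | 0 => ⟨0, 0, 0, 0, 1, 0⟩
  | k + 1 => step q (St q k)

open scoped Classical in
/-- class value for a det-1 matrix with bottom row (x, y), counting length k+1 -/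
noncomputable def CVe {F : Type*} [Field F] (q : ℚ) (k : ℕ) (x y : F) : ℚ :=
  if y = 0 then
    (if x = -1 then (St q k).bP else if x = 1 then (St q k).bQ else (St q k).bO)
  else
    (if y = 1 then (St q k).P else if y = -1 then (St q k).Q else (St q k).O)

variable {F : Type*} [Field F] [Fintype F]

noncomputable def cnt (ℓ : ℕ) (g : Matrix (Fin 2) (Fin 2) F) : ℕ := Nat.card {a : Fin ℓ → F // M a = g}

lemma cnt_one (h2 : (2 : F) ≠ 0) (g : Matrix (Fin 2) (Fin 2) F) (hg : g.det = 1) (q : ℚ) :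
    (cnt 1 g : ℚ) = CVe q 0 (g 1 0) (g 1 1) := by
  classical
  have h1m : (1 : F) ≠ -1 := fun h => h2 (by linear_combination h)
  have e : {a : Fin 1 → F // M a = g} ≃ {t : F // mat t = g} :=
    { toFun := fun a => ⟨a.1 0, by obtain ⟨a, ha⟩ := a; rw [← M_one a]; exact ha⟩
      invFun := fun t => ⟨fun _ => t.1, by rw [M_one]; exact t.2⟩
      left_inv := fun a => Subtype.ext (funext fun i => by fin_cases i <;> rfl)
      right_inv := fun t => rfl }
  rw [cnt, Nat.card_congr e]
  by_cases hy : g 1 1 = 0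
  · by_cases hx : g 1 0 = 1
    · have hg01 : g 0 1 = -1 := by
        rw [Matrix.det_fin_two, hy, hx] at hg; linear_combination -hg
      have hiff : ∀ t : F, mat t = g ↔ t = g 0 0 := by
        intro t
        constructor
        · intro h; rw [← h]; simp [mat]
        · rintro rfl
          ext i j
          fin_cases i <;> fin_cases j <;> simp [mat, hy, hx, hg01]
      have hone : Nat.card {t : F // mat t = g} = 1 := by
        haveI : Unique {t : F // mat t = g} :=
          { default := ⟨g 0 0, (hiff _).mpr rfl⟩
            uniq := fun t => Subtype.ext ((hiff _).mp t.2) }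
        exact Nat.card_unique
      rw [hone]
      simp [CVe, hy, hx, h1m, St]
    · haveI : IsEmpty {t : F // mat t = g} := ⟨fun t => by
        apply hx; rw [← t.2]; simp [mat]⟩
      rw [Nat.card_of_isEmpty]
      by_cases hx2 : g 1 0 = -1 <;> simp [CVe, hy, hx, hx2, h1m, St]
  · haveI : IsEmpty {t : F // mat t = g} := ⟨fun t => by
      apply hy; rw [← t.2]; simp [mat]⟩
    rw [Nat.card_of_isEmpty]
    by_cases h1 : g 1 1 = 1 <;> by_cases hm1 : g 1 1 = -1 <;>
      simp [CVe, hy, h1, hm1, St]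

lemma cnt_succ (k : ℕ) (g : Matrix (Fin 2) (Fin 2) F) :
    cnt (k + 1) g = ∑ t : F, cnt k (matInv t * g) := by
  classical
  have e : {a : Fin (k+1) → F // M a = g} ≃ (t : F) × {b : Fin k → F // M b = matInv t * g} :=
    { toFun := fun a => ⟨a.1 (Fin.last k), ⟨Fin.init a.1, by
        obtain ⟨a, ha⟩ := a
        dsimp only
        have h2 : M (Fin.snoc (Fin.init a) (a (Fin.last k))) = g := by
          rw [Fin.snoc_init_self]; exact ha
        rw [M_snoc] at h2
        rw [← h2, ← mul_assoc, matInv_mul_mat, one_mul]⟩⟩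
      invFun := fun p => ⟨Fin.snoc p.2.1 p.1, by
        rw [M_snoc, p.2.2, ← mul_assoc, mat_mul_matInv, one_mul]⟩
      left_inv := fun a => by
        obtain ⟨a, ha⟩ := a
        exact Subtype.ext (Fin.snoc_init_self a)
      right_inv := fun p => by
        obtain ⟨t, b, hb⟩ := p
        refine Sigma.ext (by simp) ?_
        dsimp only
        rw [Subtype.heq_iff_coe_eq (fun x => by rw [Fin.snoc_last])]
        simp }
  rw [cnt, Nat.card_congr e, Nat.card_eq_fintype_card, Fintype.card_sigma]
  exact Finset.sum_congr rfl fun t _ => (Nat.card_eq_fintype_card).symm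

lemma sum_CVe (q : ℚ) (hq : q = (Fintype.card F : ℚ)) (h2 : (2 : F) ≠ 0)
    (k : ℕ) (w0 w1 v0 v1 : F) (hdet : w0 * v1 - w1 * v0 = 1) :
    ∑ t : F, CVe q k (t * v0 - w0) (t * v1 - w1) = CVe q (k + 1) v0 v1 := by
  classical
  subst hq
  have h1m : (1 : F) ≠ -1 := fun h => h2 (by linear_combination h)
  have hm1 : (-1 : F) ≠ 1 := fun h => h1m h.symm
  have h0m : (0 : F) ≠ -1 := fun h => (neg_ne_zero.mpr one_ne_zero) h.symm
  have hm0 : (-1 : F) ≠ 0 := neg_ne_zero.mpr one_ne_zero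
  by_cases hv1 : v1 = 0
  · subst hv1
    have hw1v0 : w1 * v0 = -1 := by linear_combination -hdet
    have hw1 : w1 ≠ 0 := by
      intro h; rw [h, zero_mul] at hw1v0; exact h0m hw1v0
    have hnw1 : -w1 ≠ 0 := neg_ne_zero.mpr hw1
    by_cases hA : v0 = -1
    · have hw1' : w1 = 1 := by
        have h := hw1v0
        rw [hA] at h
        linear_combination -h
      have hstep : ∀ t : F, CVe (Fintype.card F : ℚ) k (t * v0 - w0) (t * 0 - w1)
          = (St (Fintype.card F : ℚ) k).Q := by
        intro t
        simp [CVe, hw1', hm1]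
      rw [Finset.sum_congr rfl fun t _ => hstep t, Finset.sum_const, Finset.card_univ,
        nsmul_eq_mul]
      simp [CVe, hA, h0m, hm0, St, step]
    · by_cases hB : v0 = 1
      · have hw1' : w1 = -1 := by
          have h := hw1v0
          rw [hB] at h
          linear_combination h
        have hstep : ∀ t : F, CVe (Fintype.card F : ℚ) k (t * v0 - w0) (t * 0 - w1)
            = (St (Fintype.card F : ℚ) k).P := by
          intro t
          simp [CVe, hw1', one_ne_zero]
        rw [Finset.sum_congr rfl fun t _ => hstep t, Finset.sum_const, Finset.card_univ,
          nsmul_eq_mul]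
        simp [CVe, hB, one_ne_zero, hm1, h1m, h0m, St, step]
      · have hv0 : v0 ≠ 0 := by
          intro h; rw [h, mul_zero] at hw1v0; exact h0m hw1v0
        have hnA : -w1 ≠ -1 := by
          intro h
          have hw1' : w1 = 1 := by linear_combination -h
          rw [hw1', one_mul] at hw1v0
          exact hA hw1v0
        have hnB : -w1 ≠ 1 := by
          intro h
          have hw1' : w1 = -1 := by linear_combination -h
          rw [hw1'] at hw1v0
          apply hB
          linear_combination -hw1v0
        have hstep : ∀ t : F, CVe (Fintype.card F : ℚ) k (t * v0 - w0) (t * 0 - w1)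
            = (St (Fintype.card F : ℚ) k).O := by
          intro t
          simp [CVe, hnw1, hnA, hnB]
        rw [Finset.sum_congr rfl fun t _ => hstep t, Finset.sum_const, Finset.card_univ,
          nsmul_eq_mul]
        simp [CVe, hA, hB, hv0, St, step]
  · -- main case : v1 ≠ 0
    set s := St (Fintype.card F : ℚ) k with hs
    set G : F → ℚ := fun y =>
      if y = 0 then (if v1 = 1 then s.bP else if v1 = -1 then s.bQ else s.bO)
      else (if y = 1 then s.P else if y = -1 then s.Q else s.O) with hG
    have hstep : ∀ t : F, CVe (Fintype.card F : ℚ) k (t * v0 - w0) (t * v1 - w1)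
        = G (t * v1 - w1) := by
      intro t
      by_cases hz : t * v1 - w1 = 0
      · have hmul : (t * v0 - w0) * v1 = -1 := by
          have hz' : t * v1 = w1 := by linear_combination hz
          linear_combination v0 * hz' - hdet
        have hx0 : t * v0 - w0 = -v1⁻¹ := by
          field_simp
          linear_combination hmul
        rw [hz, hx0]
        by_cases hA : v1 = 1
        · subst hA; simp [CVe, G, hm1, ← hs]
        · by_cases hB : v1 = -1
          · subst hB
            simp [CVe, G, h1m, hm1, inv_neg, inv_one, ← hs]
          · have hnA : -v1⁻¹ ≠ -1 := by
              intro h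
              apply hA
              have : v1⁻¹ = 1 := by linear_combination -h
              rwa [inv_eq_one] at this
            have hnB : -v1⁻¹ ≠ 1 := by
              intro h
              apply hB
              have hinv : v1⁻¹ = -1 := by linear_combination -h
              rw [inv_eq_iff_eq_inv] at hinv
              simpa [inv_neg, inv_one] using hinv
            have hnz : -v1⁻¹ ≠ 0 := neg_ne_zero.mpr (inv_ne_zero hv1)
            simp [CVe, G, hA, hB, hnA, hnB, hnz, ← hs]
      · simp only [CVe, hG, if_neg hz, ← hs]
    rw [Finset.sum_congr rfl fun t _ => hstep t]
    have hbij : Function.Bijective (fun t : F => t * v1 - w1) := by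
      rw [← Finite.injective_iff_bijective]
      intro a b h
      simp only [sub_left_inj] at h
      exact mul_right_cancel₀ hv1 h
    rw [Fintype.sum_bijective _ hbij _ G fun t => rfl]
    -- split off {0, 1, -1}
    have h01 : (0 : F) ∉ ({1, -1} : Finset F) := by
      simp only [Finset.mem_insert, Finset.mem_singleton]
      push_neg
      exact ⟨fun h => one_ne_zero h.symm, h0m⟩
    have h1mem : (1 : F) ∉ ({-1} : Finset F) := by simpa using h1m
    have hsub : ({0, 1, -1} : Finset F) ⊆ Finset.univ := Finset.subset_univ _
    have hc3 : ({0, 1, -1} : Finset F).card = 3 := by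
      rw [Finset.card_insert_of_notMem h01, Finset.card_insert_of_notMem h1mem,
        Finset.card_singleton]
    have hle3 : 3 ≤ Fintype.card F := by
      calc 3 = ({0, 1, -1} : Finset F).card := hc3.symm
      _ ≤ Finset.univ.card := Finset.card_le_card hsub
      _ = Fintype.card F := Finset.card_univ
    rw [← Finset.sum_sdiff hsub]
    have hsum3 : ∑ x ∈ ({0, 1, -1} : Finset F), G x = G 0 + G 1 + G (-1) := by
      rw [Finset.sum_insert h01, Finset.sum_insert h1mem, Finset.sum_singleton]
      ring
    have hconst : ∑ x ∈ Finset.univ \ ({0, 1, -1} : Finset F), G x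
        = ((Fintype.card F : ℚ) - 3) * s.O := by
      have hGO : ∀ x ∈ Finset.univ \ ({0, 1, -1} : Finset F), G x = s.O := by
        intro x hx
        simp only [Finset.mem_sdiff, Finset.mem_insert, Finset.mem_singleton] at hx
        push_neg at hx
        obtain ⟨-, hx0, hx1, hxm⟩ := hx
        simp [G, hx0, hx1, hxm]
      rw [Finset.sum_congr rfl hGO, Finset.sum_const, Finset.card_sdiff_of_subset hsub, hc3,
        Finset.card_univ, nsmul_eq_mul]
      rw [Nat.cast_sub hle3]
      norm_num
    rw [hsum3, hconst]
    -- now compare to CVe (k+1)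
    have hG1 : G 1 = s.P := by simp [G, one_ne_zero]
    have hGm : G (-1) = s.Q := by simp [G, hm0, hm1]
    rw [hG1, hGm]
    by_cases hA : v1 = 1
    · simp only [G, if_pos rfl, if_pos hA, CVe, hv1, if_neg hv1, hA, if_pos rfl]
      simp [St, step, ← hs]
      ring
    · by_cases hB : v1 = -1
      · simp only [G, if_pos rfl, if_neg hA, if_pos hB, CVe, if_neg hv1, hB]
        simp [hm1, St, step, ← hs]
        ring
      · simp only [G, if_pos rfl, if_neg hA, if_neg hB, CVe, if_neg hv1]
        simp [hA, hB, St, step, ← hs]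
        ring

lemma key (q : ℚ) (hq : q = (Fintype.card F : ℚ)) (h2 : (2 : F) ≠ 0) :
    ∀ (k : ℕ) (g : Matrix (Fin 2) (Fin 2) F), g.det = 1 →
      (cnt (k + 1) g : ℚ) = CVe q k (g 1 0) (g 1 1) := by
  intro k
  induction k with
  | zero => exact fun g hg => cnt_one h2 g hg q
  | succ k ih =>
    intro g hg
    rw [cnt_succ (k + 1) g]
    push_cast
    have hrow : ∀ t : F, ((matInv t * g) 1 0 = t * g 1 0 - g 0 0)
        ∧ ((matInv t * g) 1 1 = t * g 1 1 - g 0 1) := by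
      intro t
      constructor <;>
      · simp [matInv, Matrix.mul_apply, Fin.sum_univ_two]
        ring
    have hsum : ∀ t : F, (cnt (k + 1) (matInv t * g) : ℚ)
        = CVe q k (t * g 1 0 - g 0 0) (t * g 1 1 - g 0 1) := by
      intro t
      rw [ih (matInv t * g) (by
        rw [Matrix.det_mul, hg, mul_one]
        simp [matInv, Matrix.det_fin_two]), (hrow t).1, (hrow t).2]
    rw [Finset.sum_congr rfl fun t _ => hsum t]
    exact sum_CVe q hq h2 k (g 0 0) (g 0 1) (g 1 0) (g 1 1)
      (by rw [Matrix.det_fin_two] at hg; linear_combination hg)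

def Ef (q x e : ℚ) : S6 where
  P := (x ^ 2 - 1) / (q ^ 2 - 1)
  Q := (x ^ 2 - 1) / (q ^ 2 - 1)
  O := (x ^ 2 - 1) / (q ^ 2 - 1)
  bP := (x ^ 2 + q) / (q ^ 2 - 1) + x * ((q - 3) / (q - 1) - e) / 2
  bQ := (x ^ 2 + q) / (q ^ 2 - 1) + x * ((q - 3) / (q - 1) + e) / 2
  bO := (x ^ 2 + q) / (q ^ 2 - 1) - x / (q - 1)

lemma St_even (q : ℚ) (h1 : q - 1 ≠ 0) (hp1 : q + 1 ≠ 0) :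
    ∀ k : ℕ, St q (2 * k) = Ef q (q ^ k) ((-1) ^ k) := by
  have hq2 : q ^ 2 - 1 ≠ 0 := by
    intro h
    have h' : (q - 1) * (q + 1) = 0 := by linear_combination h
    rcases mul_eq_zero.mp h' with h'' | h''
    · exact h1 h''
    · exact hp1 h''
  intro k
  induction k with
  | zero =>
    simp only [Nat.mul_zero, pow_zero, St, Ef, S6.mk.injEq]
    refine ⟨?_, ?_, ?_, ?_, ?_, ?_⟩ <;> (field_simp; try ring)
  | succ k ih =>
    have h2k : 2 * (k + 1) = (2 * k) + 1 + 1 := by omega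
    rw [h2k]
    simp only [St]
    rw [ih]
    simp only [pow_succ, Ef, step, S6.mk.injEq]
    refine ⟨?_, ?_, ?_, ?_, ?_, ?_⟩ <;> (field_simp; try ring)

end Stmt16Aux

theorem stmt16 {F : Type*} [Field F] [Fintype F] (hq : Odd (Fintype.card F))
    (n m : ℕ) (hnm : n = 2 * m) (hn : 4 < n) :
    (Even m →
      (Nat.card {a : Fin n → F // M a = 1} : ℚ) =
        ((Fintype.card F : ℚ) - 1) *
            (((Fintype.card F : ℚ) ^ m - 1) * ((Fintype.card F : ℚ) ^ (m - 1) - 1) /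
              (((Fintype.card F : ℚ) - 1) * ((Fintype.card F : ℚ) ^ 2 - 1))) +
          (Fintype.card F : ℚ) ^ (m - 1)) ∧
    (Odd m →
      (Nat.card {a : Fin n → F // M a = 1} : ℚ) =
        ((Fintype.card F : ℚ) - 1) *
          (((Fintype.card F : ℚ) ^ m - 1) * ((Fintype.card F : ℚ) ^ (m - 1) - 1) /
            (((Fintype.card F : ℚ) - 1) * ((Fintype.card F : ℚ) ^ 2 - 1)))) := by
  classical
  have hcard1 : 1 < Fintype.card F := Fintype.one_lt_card
  have hne2 : Fintype.card F ≠ 2 := by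
    intro h
    rw [h] at hq
    exact (by decide : ¬ Odd 2) hq
  have hcard3 : 3 ≤ Fintype.card F := by omega
  have h2F : (2 : F) ≠ 0 := by
    intro h
    have hchar : ringChar F = 2 := by
      have hdvd : ringChar F ∣ 2 :=
        (CharP.cast_eq_zero_iff F (ringChar F) 2).mp (by exact_mod_cast h)
      have hprime := CharP.char_is_prime F (ringChar F)
      exact (Nat.prime_dvd_prime_iff_eq hprime Nat.prime_two).mp hdvd
    have heven := FiniteField.even_card_of_char_two hchar
    rw [Nat.odd_iff] at hq
    omega
  set qq : ℚ := (Fintype.card F : ℚ) with hqq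
  have hq3 : (3 : ℚ) ≤ qq := by rw [hqq]; exact_mod_cast hcard3
  have h1 : qq - 1 ≠ 0 := by intro h; nlinarith
  have hp1 : qq + 1 ≠ 0 := by intro h; nlinarith
  have hq2 : qq ^ 2 - 1 ≠ 0 := by
    intro h
    have h' : (qq - 1) * (qq + 1) = 0 := by linear_combination h
    rcases mul_eq_zero.mp h' with h'' | h''
    · exact h1 h''
    · exact hp1 h''
  have hm3 : 3 ≤ m := by omega
  have hdet1 : (1 : Matrix (Fin 2) (Fin 2) F).det = 1 := by simp
  have hkey := Stmt16Aux.key qq hqq h2F (n - 1) 1 hdet1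
  have hn1 : n - 1 + 1 = n := by omega
  rw [hn1] at hkey
  have e10 : (1 : Matrix (Fin 2) (Fin 2) F) 1 0 = 0 := by simp [Matrix.one_apply]
  have e11 : (1 : Matrix (Fin 2) (Fin 2) F) 1 1 = 1 := by simp [Matrix.one_apply]
  rw [e10, e11] at hkey
  have hCV : Stmt16Aux.CVe qq (n - 1) (0 : F) 1 = (Stmt16Aux.St qq (n - 1)).P := by
    simp [Stmt16Aux.CVe, (one_ne_zero : (1 : F) ≠ 0)]
  rw [hCV] at hkey
  have hidx : n - 1 = 2 * (m - 1) + 1 := by omega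
  rw [hidx] at hkey
  have hSt : Stmt16Aux.St qq (2 * (m - 1) + 1)
      = Stmt16Aux.step qq (Stmt16Aux.Ef qq (qq ^ (m - 1)) ((-1) ^ (m - 1))) := by
    rw [show Stmt16Aux.St qq (2 * (m - 1) + 1)
        = Stmt16Aux.step qq (Stmt16Aux.St qq (2 * (m - 1))) from rfl,
      Stmt16Aux.St_even qq h1 hp1 (m - 1)]
  rw [hSt] at hkey
  have hkey' : (Nat.card {a : Fin n → F // M a = 1} : ℚ)
      = (Stmt16Aux.step qq (Stmt16Aux.Ef qq (qq ^ (m - 1)) ((-1) ^ (m - 1)))).P := hkey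
  have hp : qq ^ m = qq * qq ^ (m - 1) := by
    conv_lhs => rw [show m = (m - 1) + 1 by omega]
    rw [pow_succ]
    ring
  constructor
  · intro hme
    have hneg : ((-1 : ℚ)) ^ (m - 1) = -1 :=
      Odd.neg_one_pow (Nat.Even.sub_odd (by omega) hme odd_one)
    rw [hkey', hneg, hp]
    simp only [Stmt16Aux.step, Stmt16Aux.Ef]
    field_simp
    ring
  · intro hmo
    have hneg : ((-1 : ℚ)) ^ (m - 1) = 1 :=
      Even.neg_one_pow (Nat.Odd.sub_odd hmo odd_one)
    rw [hkey', hneg, hp]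
    simp only [Stmt16Aux.step, Stmt16Aux.Ef]
    field_simp
    ring
end

section
/- For n ≥ 3, let w_n^+ and w_n^- denote the number of n-tuples over Z/4Z whose M_n product equals Id and -Id respectively. If n is odd then w_n^+ = w_n^- = (4^{n-2} - 2^{n-3})/3. If n = 2m with m even then w_n^+ = (4^{n-2} + 4·2^{n-3})/3 and w_n^- = (4^{n-2} - 2^{n-2})/3. If n = 2m with m odd then w_n^+ = (4^{n-2} - 2^{n-2})/3 and w_n^- = (4^{n-2} + 4·2^{n-3})/3. -/
abbrev V4 := ZMod 4 × ZMod 4 × ZMod 4 × ZMod 4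

def sv (v : V4) (x : ZMod 4) : V4 :=
  (-v.2.1, v.1 + v.2.1*x, -v.2.2.2, v.2.2.1 + v.2.2.2*x)

def G : ℕ → V4 → ℕ
  | 0, v => if v = (1,0,0,1) then 1 else 0
  | n+1, v => ∑ x : ZMod 4, G n (sv v x)

lemma Gsucc (n : ℕ) (v : V4) : G (n+1) v = ∑ x : ZMod 4, G n (sv v x) := rfl

lemma M_cons {n : ℕ} (x : ZMod 4) (f : Fin n → ZMod 4) :
    M (Fin.cons x f) = M f * mat x := by
  simp [M, List.ofFn_succ]

lemma minv_mat (x : ZMod 4) : mat x * !![0,1;-1,x] = 1 ∧ (!![0,1;-1,x] : Matrix (Fin 2) (Fin 2) (ZMod 4)) * mat x = 1 := by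
  constructor <;> simp [mat, Matrix.mul_fin_two, Matrix.one_fin_two]

lemma cardG : ∀ (n : ℕ) (a b c d : ZMod 4),
    Nat.card {f : Fin n → ZMod 4 // M f = !![a,b;c,d]} = G n (a,b,c,d) := by
  intro n
  induction n with
  | zero =>
    intro a b c d
    have hM : ∀ f : Fin 0 → ZMod 4, M f = 1 := fun f => rfl
    have hiff : ∀ f : Fin 0 → ZMod 4, (M f = !![a,b;c,d]) ↔
        ((a,b,c,d) : V4) = (1,0,0,1) := by
      intro f
      rw [hM f]
      rw [Matrix.one_fin_two]
      constructor
      · intro h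
        have h1 : (1 : ZMod 4) = a := by simpa using congrFun (congrFun h 0) 0
        have h2 : (0 : ZMod 4) = b := by simpa using congrFun (congrFun h 0) 1
        have h3 : (0 : ZMod 4) = c := by simpa using congrFun (congrFun h 1) 0
        have h4 : (1 : ZMod 4) = d := by simpa using congrFun (congrFun h 1) 1
        rw [← h1, ← h2, ← h3, ← h4]
      · intro h
        simp only [Prod.mk.injEq] at h
        obtain ⟨h1, h2, h3, h4⟩ := h
        subst h1; subst h2; subst h3; subst h4; rfl
    by_cases h : ((a,b,c,d) : V4) = (1,0,0,1)
    · simp only [G, if_pos h]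
      rw [Nat.card_eq_fintype_card]
      rw [Fintype.card_eq_one_iff]
      exact ⟨⟨![], (hiff _).2 h⟩, fun y => Subtype.ext (funext fun i => i.elim0)⟩
    · simp only [G, if_neg h]
      rw [Nat.card_eq_zero]
      left
      rw [isEmpty_subtype]
      intro f
      exact fun hf => h ((hiff f).1 hf)
  | succ n ih =>
    intro a b c d
    have key : {f : Fin (n+1) → ZMod 4 // M f = !![a,b;c,d]} ≃
        Σ x : ZMod 4, {f : Fin n → ZMod 4 // M f = !![a,b;c,d] * !![0,1;-1,x]} := by
      refine ⟨fun s => ⟨s.1 0, ⟨Fin.tail s.1, ?_⟩⟩, fun t => ⟨Fin.cons t.1 t.2.1, ?_⟩, ?_, ?_⟩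
      · have h := s.2
        rw [← Fin.cons_self_tail s.1, M_cons] at h
        calc M (Fin.tail s.1)
            = (M (Fin.tail s.1) * mat (s.1 0)) * !![0,1;-1,s.1 0] := by
              rw [Matrix.mul_assoc, (minv_mat _).1, Matrix.mul_one]
          _ = _ := by rw [h]
      · rw [M_cons, t.2.2, Matrix.mul_assoc, (minv_mat _).2, Matrix.mul_one]
      · intro s; ext i
        simp [Fin.cons_self_tail]
      · rintro ⟨x, f, h⟩
        rfl
    rw [Nat.card_congr key, Nat.card_eq_fintype_card, Fintype.card_sigma, Gsucc]
    refine Finset.sum_congr rfl fun x _ => ?_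
    have hm : (!![a,b;c,d] : Matrix (Fin 2) (Fin 2) (ZMod 4)) * !![0,1;-1,x] =
        !![-b, a+b*x; -d, c+d*x] := by
      simp [Matrix.mul_fin_two]
    rw [← Nat.card_eq_fintype_card, hm, ih]
    rfl
def L2 : List Nat := [0, 0, 0, 0, 0, 0, 0, 0, 0, 0, 0, 0, 0, 0, 0, 0, 0, 0, 0, 0, 0, 0, 0, 0, 0, 0, 0, 0, 0, 0, 0, 0, 0, 0, 0, 0, 0, 0, 0, 0, 0, 0, 0, 0, 0, 0, 0, 0, 0, 0, 0, 0, 0, 0, 0, 0, 0, 0, 0, 0, 0, 0, 0, 0, 0, 0, 0, 0, 0, 0, 0, 0, 0, 0, 0, 0, 0, 0, 0, 0, 0, 0, 0, 0, 0, 0, 0, 0, 0, 0, 0, 0, 0, 0, 0, 0, 0, 0, 0, 0, 0, 0, 0, 0, 0, 0, 0, 0, 0, 0, 0, 0, 0, 0, 0, 0, 0, 0, 0, 0, 0, 0, 0, 0, 0, 0, 0, 0, 0, 0, 0, 0, 0, 0, 0, 0, 0, 0, 0, 0, 0, 0, 0, 0, 0, 0, 0, 0, 0, 0, 0, 0, 0,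 0, 0, 0, 0, 0, 0, 0, 0, 0, 0, 0, 0, 0, 0, 0, 0, 0, 0, 0, 0, 0, 0, 0, 0, 0, 0, 0, 0, 0, 0, 0, 0, 0, 0, 0, 0, 0, 0, 0, 0, 0, 0, 1, 0, 0, 0, 1, 0, 0, 0, 1, 0, 0, 0, 1, 0, 0, 0, 1, 0, 0, 1, 0, 0, 1, 0, 0, 1, 0, 0, 0, 0, 0, 0, 1, 0, 1, 0, 0, 0, 0, 0, 1, 0, 1, 0, 0, 0, 0, 0, 1, 1, 0, 0, 0, 0, 1, 0, 0, 0, 0, 1, 0]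

def L3 : List Nat := [0, 0, 0, 0, 0, 0, 0, 0, 0, 0, 0, 0, 0, 0, 0, 0, 0, 0, 0, 0, 0, 0, 0, 0, 0, 0, 0, 0, 0, 0, 0, 0, 0, 0, 0, 0, 0, 0, 0, 0, 0, 0, 0, 0, 0, 0, 0, 0, 0, 0, 0, 0, 4, 4, 4, 4, 0, 0, 0, 0, 0, 0, 0, 0, 0, 1, 0, 0, 0, 1, 0, 0, 0, 1, 0, 0, 0, 1, 0, 0, 0, 1, 0, 0, 0, 0, 1, 0, 0, 0, 0, 1, 1, 0, 0, 0, 0, 1, 0, 0, 0, 0, 0, 1, 0, 1, 0, 0, 0, 0, 0, 1, 0, 1, 0, 0, 1, 0, 0, 0, 0, 0, 0, 1, 0, 0, 1, 0, 0, 0, 0, 0, 0, 0, 0, 0, 0, 0, 0, 0, 0, 0, 0, 0, 0, 0, 0, 0, 0, 2, 0, 2, 0, 0, 0, 0, 2, 0, 2, 0, 0, 0, 0, 0, 0, 0, 0, 0, 0, 0, 0, 0, 0, 0, 0, 0, 0, 0, 0, 0, 2, 0, 2, 0, 0, 0, 0, 0, 0, 2, 0, 2, 0, 0, 0, 1, 0,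 0, 0, 1, 0, 0, 0, 1, 0, 0, 0, 1, 0, 0, 0, 1, 0, 0, 1, 0, 0, 1, 0, 0, 1, 0, 0, 0, 0, 0, 0, 1, 0, 1, 0, 0, 0, 0, 0, 1, 0, 1, 0, 0, 0, 0, 0, 1, 1, 0, 0, 0, 0, 1, 0, 0, 0, 0, 1, 0]

def L4 : List Nat := [0, 0, 0, 0, 0, 0, 0, 0, 0, 0, 0, 0, 0, 0, 0, 0, 0, 0, 0, 0, 0, 0, 0, 0, 0, 0, 0, 0, 4, 4, 4, 4, 0, 0, 0, 0, 0, 0, 0, 0, 0, 0, 0, 0, 0, 0, 0, 0, 0, 0, 0, 0, 4, 4, 4, 4, 0, 0, 0, 0, 0, 0, 0, 0, 0, 8, 0, 0, 0, 8, 0, 0, 0, 8, 0, 0, 0, 8, 0, 0, 0, 8, 0, 0, 0, 0, 8, 0, 0, 0, 0, 8, 8, 0, 0, 0, 0, 8, 0, 0, 0, 0, 0, 8, 0, 8, 0, 0, 0, 0, 0, 8, 0, 8, 0, 0, 8, 0, 0, 0, 0, 0, 0, 8, 0, 0, 8, 0, 0, 0, 0, 0, 0, 0, 0, 0, 0, 0,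 0, 0, 0, 0, 0, 0, 0, 0, 0, 0, 0, 4, 0, 4, 0, 0, 0, 0, 4, 0, 4, 0, 0, 0, 0, 0, 0, 0, 0, 0, 0, 0, 0, 0, 0, 0, 0, 0, 0, 0, 0, 0, 4, 0, 4, 0, 0, 0, 0, 0, 0, 4, 0, 4, 0, 0, 0, 4, 0, 0, 0, 4, 0, 0, 0, 4, 0, 0, 0, 4, 0, 0, 0, 4, 0, 0, 4, 0, 0, 4, 0, 0, 4, 0, 0, 0, 0, 0, 0, 4, 0, 4, 0, 0, 0, 0, 0, 4, 0, 4, 0, 0, 0, 0, 0, 4, 4, 0, 0, 0, 0, 4, 0, 0, 0, 0, 4, 0]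

def L5 : List Nat := [0, 0, 0, 0, 0, 0, 0, 0, 0, 0, 0, 0, 0, 0, 0, 0, 0, 0, 0, 0, 0, 0, 0, 0, 0, 0, 0, 0, 32, 32, 32, 32, 0, 0, 0, 0, 0, 0, 0, 0, 0, 0, 0, 0, 0, 0, 0, 0, 0, 0, 0, 0, 16, 16, 16, 16, 0, 0, 0, 0, 0, 0, 0, 0, 0, 20, 0, 0, 0, 20, 0, 0, 0, 20, 0, 0, 0, 20, 0, 0, 0, 20, 0, 0, 0, 0, 20, 0, 0, 0, 0, 20, 20, 0, 0, 0, 0, 20, 0, 0, 0, 0, 0, 20, 0, 20, 0, 0, 0, 0, 0, 20, 0, 20, 0, 0, 20, 0, 0, 0, 0, 0, 0, 20, 0, 0, 20, 0, 0, 0, 0, 0, 0, 0, 0, 0, 0, 0, 0, 0, 0, 0, 0, 0, 0, 0, 0, 0, 0, 24, 0, 24, 0, 0, 0, 0, 24, 0, 24, 0, 0, 0, 0, 0, 0, 0, 0, 0, 0, 0, 0, 0, 0, 0, 0, 0, 0, 0, 0, 0, 24, 0, 24, 0, 0, 0, 0, 0, 0, 24, 0, 24, 0, 0, 0, 20, 0,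 0, 0, 20, 0, 0, 0, 20, 0, 0, 0, 20, 0, 0, 0, 20, 0, 0, 20, 0, 0, 20, 0, 0, 20, 0, 0, 0, 0, 0, 0, 20, 0, 20, 0, 0, 0, 0, 0, 20, 0, 20, 0, 0, 0, 0, 0, 20, 20, 0, 0, 0, 0, 20, 0, 0, 0, 0, 20, 0]

def L6 : List Nat := [0, 0, 0, 0, 0, 0, 0, 0, 0, 0, 0, 0, 0, 0, 0, 0, 0, 0, 0, 0, 0, 0, 0, 0, 0, 0, 0, 0, 80, 80, 80, 80, 0, 0, 0, 0, 0, 0, 0, 0, 0, 0, 0, 0, 0, 0, 0, 0, 0, 0, 0, 0, 80, 80, 80, 80, 0, 0, 0, 0, 0, 0, 0, 0, 0, 80, 0, 0, 0, 80, 0, 0, 0, 80, 0, 0, 0, 80, 0, 0, 0, 80, 0, 0, 0, 0, 80, 0, 0, 0, 0, 80, 80, 0, 0, 0, 0, 80, 0, 0, 0, 0, 0, 80, 0, 80, 0, 0, 0, 0, 0, 80, 0, 80, 0, 0, 80, 0, 0, 0, 0, 0, 0, 80, 0, 0, 80, 0, 0, 0, 0, 0, 0, 0, 0, 0, 0, 0,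 0, 0, 0, 0, 0, 0, 0, 0, 0, 0, 0, 80, 0, 80, 0, 0, 0, 0, 80, 0, 80, 0, 0, 0, 0, 0, 0, 0, 0, 0, 0, 0, 0, 0, 0, 0, 0, 0, 0, 0, 0, 0, 80, 0, 80, 0, 0, 0, 0, 0, 0, 80, 0, 80, 0, 0, 0, 96, 0, 0, 0, 96, 0, 0, 0, 96, 0, 0, 0, 96, 0, 0, 0, 96, 0, 0, 96, 0, 0, 96, 0, 0, 96, 0, 0, 0, 0, 0, 0, 96, 0, 96, 0, 0, 0, 0, 0, 96, 0, 96, 0, 0, 0, 0, 0, 96, 96, 0, 0, 0, 0, 96, 0, 0, 0, 0, 96, 0]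

def idx (v : V4) : ℕ := v.1.val + 4*v.2.1.val + 16*v.2.2.1.val + 64*v.2.2.2.val

def TT (L : List ℕ) (v : V4) : ℕ := L.getD (idx v) 0

set_option maxRecDepth 100000 in
lemma h2 : ∀ v : V4, G 2 v = TT L2 v := by decide

set_option maxRecDepth 100000 in
lemma s3 : ∀ v : V4, (∑ x : ZMod 4, TT L2 (sv v x)) = TT L3 v := by decide
set_option maxRecDepth 100000 in
lemma s4 : ∀ v : V4, (∑ x : ZMod 4, TT L3 (sv v x)) = TT L4 v := by decide
set_option maxRecDepth 100000 in
lemma s5 : ∀ v : V4, (∑ x : ZMod 4, TT L4 (sv v x)) = TT L5 v := by decide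
set_option maxRecDepth 100000 in
lemma s6 : ∀ v : V4, (∑ x : ZMod 4, TT L5 (sv v x)) = TT L6 v := by decide

lemma h3 : ∀ v : V4, G 3 v = TT L3 v := by
  intro v; rw [Gsucc]; rw [Finset.sum_congr rfl fun x _ => h2 (sv v x)]; exact s3 v
lemma h4 : ∀ v : V4, G 4 v = TT L4 v := by
  intro v; rw [Gsucc]; rw [Finset.sum_congr rfl fun x _ => h3 (sv v x)]; exact s4 v
lemma h5 : ∀ v : V4, G 5 v = TT L5 v := by
  intro v; rw [Gsucc]; rw [Finset.sum_congr rfl fun x _ => h4 (sv v x)]; exact s5 v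
lemma h6 : ∀ v : V4, G 6 v = TT L6 v := by
  intro v; rw [Gsucc]; rw [Finset.sum_congr rfl fun x _ => h5 (sv v x)]; exact s6 v

set_option maxRecDepth 100000 in
lemma tbase : ∀ v : V4, TT L6 v = 2 * TT L5 v + 4 * TT L4 v + 8 * TT L3 v + 32 * TT L2 v := by
  decide

lemma grec : ∀ (n : ℕ) (v : V4), G (n+6) v = 2 * G (n+5) v + 4 * G (n+4) v + 8 * G (n+3) v + 32 * G (n+2) v := by
  intro n
  induction n with
  | zero => intro v; rw [h6, h5, h4, h3, h2]; exact tbase v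
  | succ n ih =>
    intro v
    rw [show n+1+6 = (n+6)+1 from rfl, show n+1+5 = (n+5)+1 from rfl,
      show n+1+4 = (n+4)+1 from rfl, show n+1+3 = (n+3)+1 from rfl,
      show n+1+2 = (n+2)+1 from rfl, Gsucc, Gsucc, Gsucc, Gsucc, Gsucc]
    rw [Finset.sum_congr rfl fun x _ => ih (sv v x)]
    rw [Finset.sum_add_distrib, Finset.sum_add_distrib, Finset.sum_add_distrib,
      ← Finset.mul_sum, ← Finset.mul_sum, ← Finset.mul_sum, ← Finset.mul_sum]

lemma grecQ (n : ℕ) (v : V4) : (G (n+6) v : ℚ) =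
    2 * (G (n+5) v : ℚ) + 4 * (G (n+4) v : ℚ) + 8 * (G (n+3) v : ℚ) + 32 * (G (n+2) v : ℚ) := by
  exact_mod_cast congrArg (Nat.cast (R := ℚ)) (grec n v)

def pt1 : V4 := (1,0,0,1)
def ptm : V4 := (3,0,0,3)

set_option maxRecDepth 100000 in
lemma win : ∀ k : ℕ,
    ((G (4*k+3) pt1 : ℚ) = (4*256^k - 16^k)/3) ∧
    ((G (4*k+4) pt1 : ℚ) = (16*256^k + 8*16^k)/3) ∧
    ((G (4*k+5) pt1 : ℚ) = (64*256^k - 4*16^k)/3) ∧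
    ((G (4*k+6) pt1 : ℚ) = (256*256^k - 16*16^k)/3) ∧
    ((G (4*k+3) ptm : ℚ) = (4*256^k - 16^k)/3) ∧
    ((G (4*k+4) ptm : ℚ) = (16*256^k - 4*16^k)/3) ∧
    ((G (4*k+5) ptm : ℚ) = (64*256^k - 4*16^k)/3) ∧
    ((G (4*k+6) ptm : ℚ) = (256*256^k + 32*16^k)/3) := by
  intro k
  induction k with
  | zero =>
    have e3 : G 3 pt1 = 1 := by rw [h3]; decide
    have e4 : G 4 pt1 = 8 := by rw [h4]; decide
    have e5 : G 5 pt1 = 20 := by rw [h5]; decide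
    have e6 : G 6 pt1 = 80 := by rw [h6]; decide
    have f3 : G 3 ptm = 1 := by rw [h3]; decide
    have f4 : G 4 ptm = 4 := by rw [h4]; decide
    have f5 : G 5 ptm = 20 := by rw [h5]; decide
    have f6 : G 6 ptm = 96 := by rw [h6]; decide
    norm_num [e3, e4, e5, e6, f3, f4, f5, f6]
  | succ k ih =>
    obtain ⟨p3, p4, p5, p6, q3, q4, q5, q6⟩ := ih
    have p7 := grecQ (4*k+1) pt1
    simp only [show 4*k+1+6 = 4*(k+1)+3 by ring, show 4*k+1+5 = 4*k+6 by ring,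
      show 4*k+1+4 = 4*k+5 by ring, show 4*k+1+3 = 4*k+4 by ring,
      show 4*k+1+2 = 4*k+3 by ring] at p7
    rw [p6, p5, p4, p3] at p7
    have p8 := grecQ (4*k+2) pt1
    simp only [show 4*k+2+6 = 4*(k+1)+4 by ring, show 4*k+2+5 = 4*(k+1)+3 by ring,
      show 4*k+2+4 = 4*k+6 by ring, show 4*k+2+3 = 4*k+5 by ring,
      show 4*k+2+2 = 4*k+4 by ring] at p8
    rw [p7, p6, p5, p4] at p8
    have p9 := grecQ (4*k+3) pt1
    simp only [show 4*k+3+6 = 4*(k+1)+5 by ring, show 4*k+3+5 = 4*(k+1)+4 by ring,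
      show 4*k+3+4 = 4*(k+1)+3 by ring, show 4*k+3+3 = 4*k+6 by ring,
      show 4*k+3+2 = 4*k+5 by ring] at p9
    rw [p8, p7, p6, p5] at p9
    have p10 := grecQ (4*k+4) pt1
    simp only [show 4*k+4+6 = 4*(k+1)+6 by ring, show 4*k+4+5 = 4*(k+1)+5 by ring,
      show 4*k+4+4 = 4*(k+1)+4 by ring, show 4*k+4+3 = 4*(k+1)+3 by ring,
      show 4*k+4+2 = 4*k+6 by ring] at p10
    rw [p9, p8, p7, p6] at p10
    have r7 := grecQ (4*k+1) ptm
    simp only [show 4*k+1+6 = 4*(k+1)+3 by ring, show 4*k+1+5 = 4*k+6 by ring,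
      show 4*k+1+4 = 4*k+5 by ring, show 4*k+1+3 = 4*k+4 by ring,
      show 4*k+1+2 = 4*k+3 by ring] at r7
    rw [q6, q5, q4, q3] at r7
    have r8 := grecQ (4*k+2) ptm
    simp only [show 4*k+2+6 = 4*(k+1)+4 by ring, show 4*k+2+5 = 4*(k+1)+3 by ring,
      show 4*k+2+4 = 4*k+6 by ring, show 4*k+2+3 = 4*k+5 by ring,
      show 4*k+2+2 = 4*k+4 by ring] at r8
    rw [r7, q6, q5, q4] at r8
    have r9 := grecQ (4*k+3) ptm
    simp only [show 4*k+3+6 = 4*(k+1)+5 by ring, show 4*k+3+5 = 4*(k+1)+4 by ring,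
      show 4*k+3+4 = 4*(k+1)+3 by ring, show 4*k+3+3 = 4*k+6 by ring,
      show 4*k+3+2 = 4*k+5 by ring] at r9
    rw [r8, r7, q6, q5] at r9
    have r10 := grecQ (4*k+4) ptm
    simp only [show 4*k+4+6 = 4*(k+1)+6 by ring, show 4*k+4+5 = 4*(k+1)+5 by ring,
      show 4*k+4+4 = 4*(k+1)+4 by ring, show 4*k+4+3 = 4*(k+1)+3 by ring,
      show 4*k+4+2 = 4*k+6 by ring] at r10
    rw [r9, r8, r7, q6] at r10
    refine ⟨?_, ?_, ?_, ?_, ?_, ?_, ?_, ?_⟩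
    · rw [p7]; ring
    · rw [p8]; ring
    · rw [p9]; ring
    · rw [p10]; ring
    · rw [r7]; ring
    · rw [r8]; ring
    · rw [r9]; ring
    · rw [r10]; ring

lemma card_one (n : ℕ) : Nat.card {a : Fin n → ZMod 4 // M a = 1} = G n pt1 := by
  rw [show (1 : Matrix (Fin 2) (Fin 2) (ZMod 4)) = !![1,0;0,1] from Matrix.one_fin_two]
  exact cardG n 1 0 0 1

lemma card_mone (n : ℕ) : Nat.card {a : Fin n → ZMod 4 // M a = -1} = G n ptm := by
  rw [show (-1 : Matrix (Fin 2) (Fin 2) (ZMod 4)) = !![3,0;0,3] from by decide]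
  exact cardG n 3 0 0 3

theorem stmt17 (n : ℕ) (hn : 3 ≤ n) :
    (Odd n →
      (Nat.card {a : Fin n → ZMod 4 // M a = 1} : ℚ) = ((4 : ℚ) ^ (n - 2) - 2 ^ (n - 3)) / 3 ∧
      (Nat.card {a : Fin n → ZMod 4 // M a = -1} : ℚ) = ((4 : ℚ) ^ (n - 2) - 2 ^ (n - 3)) / 3) ∧
    (∀ m : ℕ, n = 2 * m → Even m →
      (Nat.card {a : Fin n → ZMod 4 // M a = 1} : ℚ) =
          ((4 : ℚ) ^ (n - 2) + 4 * 2 ^ (n - 3)) / 3 ∧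
      (Nat.card {a : Fin n → ZMod 4 // M a = -1} : ℚ) =
          ((4 : ℚ) ^ (n - 2) - 2 ^ (n - 2)) / 3) ∧
    (∀ m : ℕ, n = 2 * m → Odd m →
      (Nat.card {a : Fin n → ZMod 4 // M a = 1} : ℚ) =
          ((4 : ℚ) ^ (n - 2) - 2 ^ (n - 2)) / 3 ∧
      (Nat.card {a : Fin n → ZMod 4 // M a = -1} : ℚ) =
          ((4 : ℚ) ^ (n - 2) + 4 * 2 ^ (n - 3)) / 3) := by
  have P4 : ∀ j : ℕ, (4:ℚ)^(4*j) = 256^j := fun j => by rw [pow_mul]; norm_num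
  have P2 : ∀ j : ℕ, (2:ℚ)^(4*j) = 16^j := fun j => by rw [pow_mul]; norm_num
  obtain ⟨k, hk⟩ : ∃ k, n = 4*k+3 ∨ n = 4*k+4 ∨ n = 4*k+5 ∨ n = 4*k+6 := ⟨(n-3)/4, by omega⟩
  obtain ⟨w1, w2, w3, w4, w5, w6, w7, w8⟩ := win k
  rcases hk with h | h | h | h <;> subst h
  · refine ⟨fun _ => ⟨?_, ?_⟩, fun m hm _ => absurd hm (by omega),
      fun m hm _ => absurd hm (by omega)⟩
    · rw [card_one, w1, show 4*k+3-2 = 4*k+1 by omega, show 4*k+3-3 = 4*k+0 by omega,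
        pow_add, pow_add, P4, P2]
      ring
    · rw [card_mone, w5, show 4*k+3-2 = 4*k+1 by omega, show 4*k+3-3 = 4*k+0 by omega,
        pow_add, pow_add, P4, P2]
      ring
  · refine ⟨fun hodd => absurd (Nat.odd_iff.mp hodd) (by omega),
      fun m hm _ => ⟨?_, ?_⟩,
      fun m hm hodd => absurd (Nat.odd_iff.mp hodd) (by omega)⟩
    · rw [card_one, w2, show 4*k+4-2 = 4*k+2 by omega, show 4*k+4-3 = 4*k+1 by omega,
        pow_add, pow_add, P4, P2]
      ring
    · rw [card_mone, w6, show 4*k+4-2 = 4*k+2 by omega, pow_add, pow_add, P4, P2]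
      ring
  · refine ⟨fun _ => ⟨?_, ?_⟩, fun m hm _ => absurd hm (by omega),
      fun m hm _ => absurd hm (by omega)⟩
    · rw [card_one, w3, show 4*k+5-2 = 4*k+3 by omega, show 4*k+5-3 = 4*k+2 by omega,
        pow_add, pow_add, P4, P2]
      ring
    · rw [card_mone, w7, show 4*k+5-2 = 4*k+3 by omega, show 4*k+5-3 = 4*k+2 by omega,
        pow_add, pow_add, P4, P2]
      ring
  · refine ⟨fun hodd => absurd (Nat.odd_iff.mp hodd) (by omega),
      fun m hm heven => absurd (Nat.even_iff.mp heven) (by omega),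
      fun m hm _ => ⟨?_, ?_⟩⟩
    · rw [card_one, w4, show 4*k+6-2 = 4*k+4 by omega, pow_add, pow_add, P4, P2]
      ring
    · rw [card_mone, w8, show 4*k+6-2 = 4*k+4 by omega, show 4*k+6-3 = 4*k+3 by omega,
        pow_add, pow_add, P4, P2]
      ring
end

section
/- Over Z/NZ (N ≥ 2), a 4-tuple (a_1,a_2,a_3,a_4) with M_4(a_1,a_2,a_3,a_4) = ±Id is reducible if and only if some a_i equals 1 or -1. Here reducible means the tuple is equivalent (up to cyclic permutations and reversal) to a sum (b_1,...,b_m) ⊕ (c_1,...,c_l) where (c_1,...,c_l) also satisfies M_l(c) = ±Id and m, l ≥ 3; for size 4 this forces m = l = 3, and the explicit decomposition for a_4 = ε ∈ {1,-1} is (a_1,a_2,a_3,ε) = (a_1-ε, a_2, a_3-ε) ⊕ (ε,ε,ε). -/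
lemma aux3 {A : Type*} [CommRing A] (c : Fin 3 → A) (hc : M c = 1 ∨ M c = -1) :
    c 1 = 1 ∨ c 1 = -1 := by
  have h : (M c) 1 1 = -(c 1) := by
    simp [M, List.ofFn_succ, mat, Matrix.mul_apply, Fin.sum_univ_succ]
  rcases hc with hc | hc <;> simp [hc, Matrix.one_apply] at h
  · right; linear_combination h
  · left; exact h.symm

lemma auxeps {A : Type*} [CommRing A] (ε : A) (hε : ε = 1 ∨ ε = -1) :
    M (fun _ : Fin 3 => ε) = 1 ∨ M (fun _ : Fin 3 => ε) = -1 := by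
  rcases hε with h | h <;> subst h
  · right; ext i j; fin_cases i <;> fin_cases j <;>
      simp [M, List.ofFn_succ, mat, Matrix.mul_apply, Fin.sum_univ_succ]
  · left; ext i j; fin_cases i <;> fin_cases j <;>
      simp [M, List.ofFn_succ, mat, Matrix.mul_apply, Fin.sum_univ_succ]

theorem stmt19 (N : ℕ) (hN : 2 ≤ N) (a : Fin 4 → ZMod N)
    (ha : M a = 1 ∨ M a = -1) :
    (∃ b c : Fin 3 → ZMod N, (M c = 1 ∨ M c = -1) ∧
      ∃ k : Fin 4,
        (∀ i, a i = ![b 0 + c 2, b 1, b 2 + c 0, c 1] (i + k)) ∨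
        (∀ i, a i = ![b 0 + c 2, b 1, b 2 + c 0, c 1] (k - i))) ↔
    (∃ i, a i = 1 ∨ a i = -1) := by
  constructor
  · rintro ⟨b, c, hc, k, h | h⟩
    · refine ⟨3 - k, ?_⟩
      have h3 : (3 - k) + k = (3 : Fin 4) := by abel
      rw [h (3 - k), h3]
      simpa using aux3 c hc
    · refine ⟨k - 3, ?_⟩
      have h3 : k - (k - 3) = (3 : Fin 4) := by abel
      rw [h (k - 3), h3]
      simpa using aux3 c hc
  · rintro ⟨i, hi⟩
    set ε := a i with hε
    refine ⟨![a (i+1) - ε, a (i+2), a (i+3) - ε], fun _ => ε, auxeps ε hi, 3 - i, Or.inl ?_⟩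
    intro j
    obtain ⟨t, rfl⟩ : ∃ t, j = i + t := ⟨j - i, by abel⟩
    have h3 : i + t + (3 - i) = 3 + t := by abel
    rw [h3]
    fin_cases t <;> simp [hε]
end
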